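/- arXiv:1801.03807 — 2 statements merged into one kernel-verified Lean document; each statement's English description precedes it below -/
import Mathlib

section
/- The map φ_⧢ : A_z^0 → A_z^0 defined by φ_⧢(w) = Σ_{r≥0} Σ_{b_1,…,b_r ∈ {0,z}} Const(∂_{1,b_1}···∂_{1,b_r} w) ⧢ e_{b_1}···e_{b_r} is a ring endomorphism of (A_z^0, ⧢): φ_⧢(u ⧢ v) = φ_⧢(u) ⧢ φ_⧢(v). -/
open scoped BigOperators

/-- Letters: `0 ↦ e₀`, `1 ↦ e₁`, `2 ↦ e_z`. -/
abbrev Letter := Fin 3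

/-- The free noncommutative ring `𝒜_z = ℤ⟨e₀, e₁, e_z⟩`. -/
abbrev Az := MonoidAlgebra ℤ (FreeMonoid Letter)

/-- The monomial (word) corresponding to a list of letters. -/
noncomputable def wordOf (l : List Letter) : Az :=
  MonoidAlgebra.single (FreeMonoid.ofList l) 1

/-- The extended sequence `a₀ = 0, a₁, …, a_n, a_{n+1} = 1`. -/
def ext (a : List Letter) (j : ℕ) : Letter :=
  ((0 : Letter) :: a ++ [1]).getD j 1

/-- `∂_{α,β}` on a word. -/
noncomputable def Dword (α β : Letter) (a : List Letter) : Az :=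
  ∑ i ∈ Finset.range a.length,
    (((if ({ext a (i + 1), ext a (i + 2)} : Finset Letter) = {α, β} then 1 else 0)
      - (if ({ext a i, ext a (i + 1)} : Finset Letter) = {α, β} then 1 else 0) : ℤ))
      • wordOf (a.eraseIdx i)

/-- The linear operator `∂_{α,β} : 𝒜_z → 𝒜_z`. -/
noncomputable def del (α β : Letter) : Az →ₗ[ℤ] Az :=
  (Finsupp.lsum ℤ fun w => LinearMap.toSpanSingleton ℤ Az (Dword α β (FreeMonoid.toList w))) ∘ₗ (MonoidAlgebra.coeffLinearEquiv ℤ).toLinearMap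

/-- The shuffle product of two words. -/
noncomputable def shuffleWord : List Letter → List Letter → Az
  | [], v => wordOf v
  | u, [] => wordOf u
  | a :: u, b :: v =>
      wordOf [a] * shuffleWord u (b :: v) + wordOf [b] * shuffleWord (a :: u) v
termination_by u v => u.length + v.length

/-- The shuffle product as a bilinear map on `𝒜_z`. -/
noncomputable def sh : Az →ₗ[ℤ] Az →ₗ[ℤ] Az :=
  (Finsupp.lsum ℤ fun u => LinearMap.toSpanSingleton ℤ (Az →ₗ[ℤ] Az)
    ((Finsupp.lsum ℤ fun v =>
      LinearMap.toSpanSingleton ℤ Az (shuffleWord (FreeMonoid.toList u) (FreeMonoid.toList v))) ∘ₗ (MonoidAlgebra.coeffLinearEquiv ℤ).toLinearMap)) ∘ₗ (MonoidAlgebra.coeffLinearEquiv ℤ).toLinearMap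

/-- The (generalized) stuffle product of two words (the left word should lie in `𝒜`). -/
noncomputable def stWord : List Letter → List Letter → Az
  | [], v => wordOf v
  | u, [] => wordOf u
  | a :: u, b :: v =>
      if a = 0 then wordOf [0] * stWord u (b :: v)
      else if a = 1 then
        wordOf [b] * (stWord u (b :: v) + stWord (a :: u) v - wordOf [0] * stWord u v)
      else 0
termination_by u v => u.length + v.length

/-- The stuffle product as a bilinear map. -/
noncomputable def st : Az →ₗ[ℤ] Az →ₗ[ℤ] Az :=
  (Finsupp.lsum ℤ fun u => LinearMap.toSpanSingleton ℤ (Az →ₗ[ℤ] Az)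
    ((Finsupp.lsum ℤ fun v =>
      LinearMap.toSpanSingleton ℤ Az (stWord (FreeMonoid.toList u) (FreeMonoid.toList v))) ∘ₗ (MonoidAlgebra.coeffLinearEquiv ℤ).toLinearMap)) ∘ₗ (MonoidAlgebra.coeffLinearEquiv ℤ).toLinearMap

/-- `Const` kills every word containing the letter `e_z`. -/
noncomputable def Const : Az →ₗ[ℤ] Az :=
  (Finsupp.lsum ℤ fun w => LinearMap.toSpanSingleton ℤ Az
    (if (2 : Letter) ∈ FreeMonoid.toList w then 0 else wordOf (FreeMonoid.toList w))) ∘ₗ (MonoidAlgebra.coeffLinearEquiv ℤ).toLinearMap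

/-- `τ_z` on letters. -/
noncomputable def tauLetter (a : Letter) : Az :=
  if a = 0 then wordOf [2] - wordOf [1]
  else if a = 1 then wordOf [2] - wordOf [0]
  else wordOf [2]

/-- `τ_z` on a word (reversing the word). -/
noncomputable def tauWord : List Letter → Az
  | [] => 1
  | a :: u => tauWord u * tauLetter a

/-- The duality anti-automorphism `τ_z`. -/
noncomputable def tau : Az →ₗ[ℤ] Az :=
  (Finsupp.lsum ℤ fun w => LinearMap.toSpanSingleton ℤ Az (tauWord (FreeMonoid.toList w))) ∘ₗ (MonoidAlgebra.coeffLinearEquiv ℤ).toLinearMap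

/-- `𝒜_z^0`: span of the empty word and of words beginning with `e₁` or `e_z`
and ending in `e₀` or `e_z`. -/
noncomputable def Az0 : Submodule ℤ Az :=
  Submodule.span ℤ {x | ∃ l : List Letter,
    (l = [] ∨ (l.head? ≠ some 0 ∧ l.getLast? ≠ some 1)) ∧ x = wordOf l}

/-- `𝒜_z^1`: span of the empty word and of words beginning with `e₁` or `e_z`. -/
noncomputable def Az1 : Submodule ℤ Az :=
  Submodule.span ℤ {x | ∃ l : List Letter, l.head? ≠ some 0 ∧ x = wordOf l}

/-- `𝒜 = ℤ⟨e₀, e₁⟩` inside `𝒜_z`. -/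
noncomputable def Asub : Submodule ℤ Az :=
  Submodule.span ℤ {x | ∃ l : List Letter, (2 : Letter) ∉ l ∧ x = wordOf l}

/-- `𝒜^1 = ℤ ⊕ e₁𝒜`. -/
noncomputable def A1sub : Submodule ℤ Az :=
  Submodule.span ℤ {x | ∃ l : List Letter,
    ((2 : Letter) ∉ l ∧ l.head? ≠ some 0 ∧ l.head? ≠ some 2) ∧ x = wordOf l}

/-- `𝒜^0 = ℤ ⊕ e₁𝒜e₀`. -/
noncomputable def A0sub : Submodule ℤ Az :=
  Submodule.span ℤ {x | ∃ l : List Letter,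
    ((2 : Letter) ∉ l ∧ (l = [] ∨ (l.head? = some 1 ∧ l.getLast? = some 0))) ∧ x = wordOf l}

/-- `𝒜_z^{-2} = ℤ ⊕ e₁𝒜_z e₀ ⊕ e_z 𝒜_z e₀`. -/
noncomputable def Azm2 : Submodule ℤ Az :=
  Submodule.span ℤ {x | ∃ l : List Letter,
    (l = [] ∨ (l.head? ≠ some 0 ∧ l.getLast? = some 0)) ∧ x = wordOf l}

/-- `𝒜_z^0 ∩ ℤ⟨e₁, e_z⟩`. -/
noncomputable def Wsub : Submodule ℤ Az :=
  Submodule.span ℤ {x | ∃ l : List Letter,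
    ((0 : Letter) ∉ l ∧ (l = [] ∨ l.getLast? = some 2)) ∧ x = wordOf l}

/-- `ℤ⟨e_z⟩`: span of powers of `e_z`. -/
noncomputable def Zez : Submodule ℤ Az :=
  Submodule.span ℤ {x | ∃ k : ℕ, x = wordOf (List.replicate k 2)}

/-- `𝒜_z^{-1} = 𝒜_z^{-2}·ℤ⟨e_z⟩`. -/
noncomputable def Azm1 : Submodule ℤ Az :=
  Submodule.span ℤ {x | ∃ l : List Letter, ∃ k : ℕ,
    (l = [] ∨ (l.head? ≠ some 0 ∧ l.getLast? = some 0)) ∧ x = wordOf (l ++ List.replicate k 2)}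

/-- `ℤ⟨e₀, e_z⟩ ∩ 𝒜_z^0`. -/
noncomputable def Vsub : Submodule ℤ Az :=
  Submodule.span ℤ {x | ∃ l : List Letter,
    ((1 : Letter) ∉ l ∧ (l = [] ∨ l.head? = some 2)) ∧ x = wordOf l}

/-- All lists of length `r` with entries in `{e₀, e_z}`. -/
def tuples : ℕ → List (List Letter)
  | 0 => [[]]
  | n + 1 => (tuples n).flatMap fun t => [(0 : Letter) :: t, (2 : Letter) :: t]

/-- `∂_{1,b₁} ∘ ⋯ ∘ ∂_{1,b_r}` for `bs = [b₁, …, b_r]`. -/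
noncomputable def delChain : List Letter → Az →ₗ[ℤ] Az
  | [] => LinearMap.id
  | b :: bs => (del 1 b).comp (delChain bs)

/-- `∂_{z,α₁} ∘ ⋯ ∘ ∂_{z,α_r}` for `as = [α₁, …, α_r]`. -/
noncomputable def delZChain : List Letter → Az →ₗ[ℤ] Az
  | [] => LinearMap.id
  | a :: as => (del 2 a).comp (delZChain as)

/-- `φ_⧢` on a word. -/
noncomputable def phiShWord (l : List Letter) : Az :=
  ∑ r ∈ Finset.range (l.length + 1),
    ((tuples r).map fun b => sh (Const (delChain b (wordOf l))) (wordOf b)).sum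

/-- `φ_⧢ : 𝒜_z^0 → 𝒜_z^0` (defined on all of `𝒜_z`). -/
noncomputable def phiSh : Az →ₗ[ℤ] Az :=
  (Finsupp.lsum ℤ fun w => LinearMap.toSpanSingleton ℤ Az (phiShWord (FreeMonoid.toList w))) ∘ₗ (MonoidAlgebra.coeffLinearEquiv ℤ).toLinearMap

/-- `φ_*` on a word. -/
noncomputable def phiStWord (l : List Letter) : Az :=
  ∑ r ∈ Finset.range (l.length + 1),
    ((tuples r).map fun b => st (Const (delChain b (wordOf l))) (wordOf b)).sum

/-- `φ_* : 𝒜_z^0 → 𝒜_z^0` (defined on all of `𝒜_z`). -/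
noncomputable def phiSt : Az →ₗ[ℤ] Az :=
  (Finsupp.lsum ℤ fun w => LinearMap.toSpanSingleton ℤ Az (phiStWord (FreeMonoid.toList w))) ∘ₗ (MonoidAlgebra.coeffLinearEquiv ℤ).toLinearMap

/-- `φ_⊗` on a word. -/
noncomputable def phiTWord (l : List Letter) : TensorProduct ℤ Az Az :=
  ∑ r ∈ Finset.range (l.length + 1),
    ((tuples r).map fun b => (Const (delChain b (wordOf l))) ⊗ₜ[ℤ] (wordOf b)).sum

/-- `φ_⊗ : 𝒜_z^0 → 𝒜^0 ⊗ ℤ⟨e₀, e_z⟩` (defined on all of `𝒜_z`). -/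
noncomputable def phiT : Az →ₗ[ℤ] TensorProduct ℤ Az Az :=
  (Finsupp.lsum ℤ fun w => LinearMap.toSpanSingleton ℤ (TensorProduct ℤ Az Az)
    (phiTWord (FreeMonoid.toList w))) ∘ₗ (MonoidAlgebra.coeffLinearEquiv ℤ).toLinearMap

/-- The `i`-fold shuffle power of `e₁`. -/
noncomputable def e1pow : ℕ → Az
  | 0 => 1
  | n + 1 => sh (wordOf [1]) (e1pow n)

/-- Substitution `z → 1` on words. -/
noncomputable def subst1 : Az →ₗ[ℤ] Az :=
  (Finsupp.lsum ℤ fun w => LinearMap.toSpanSingleton ℤ Az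
    (wordOf ((FreeMonoid.toList w).map fun a => if a = 2 then 1 else a))) ∘ₗ (MonoidAlgebra.coeffLinearEquiv ℤ).toLinearMap


section Helper
open Finset

/-- delta symbol -/
def dl (α β x y : Letter) : ℤ := if ({x,y} : Finset Letter) = {α,β} then 1 else 0

lemma dl_comm (α β x y : Letter) : dl α β x y = dl α β y x := by
  simp [dl, Finset.pair_comm]

def extc (c : Letter) (a : List Letter) (j : ℕ) : Letter := ((c :: a ++ [1]).getD j 1)

noncomputable def DcWord (α β c : Letter) (a : List Letter) : Az :=
  ∑ i ∈ Finset.range a.length,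
    (dl α β (extc c a (i+1)) (extc c a (i+2)) - dl α β (extc c a i) (extc c a (i+1)))
      • wordOf (a.eraseIdx i)

lemma Dword_eq (α β : Letter) (a : List Letter) : Dword α β a = DcWord α β 0 a := rfl

noncomputable def Delc (α β c : Letter) : Az →ₗ[ℤ] Az :=
  (Finsupp.lsum ℤ fun w => LinearMap.toSpanSingleton ℤ Az (DcWord α β c (FreeMonoid.toList w))) ∘ₗ (MonoidAlgebra.coeffLinearEquiv ℤ).toLinearMap

lemma del_eq (α β : Letter) : del α β = Delc α β 0 := rfl

/-- key evaluation lemma -/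
lemma lsum_single_eval {N : Type} [AddCommMonoid N] [Module ℤ N]
    (f : FreeMonoid Letter → N) (a : FreeMonoid Letter) (b : ℤ) :
    (Finsupp.lsum ℤ (fun w => LinearMap.toSpanSingleton ℤ N (f w)) ∘ₗ (MonoidAlgebra.coeffLinearEquiv ℤ).toLinearMap)
      (MonoidAlgebra.single a b : Az) = b • f a := by
  show Finsupp.lsum ℤ _ (Finsupp.single a b) = _
  rw [Finsupp.lsum_single]
  simp

lemma lsum_single_eval1 {N : Type} [AddCommMonoid N] [Module ℤ N]
    (f : FreeMonoid Letter → N) (a : FreeMonoid Letter) :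
    (Finsupp.lsum ℤ (fun w => LinearMap.toSpanSingleton ℤ N (f w)) ∘ₗ (MonoidAlgebra.coeffLinearEquiv ℤ).toLinearMap)
      (MonoidAlgebra.single a 1 : Az) = f a := by
  show Finsupp.lsum ℤ _ (Finsupp.single a 1) = _
  rw [Finsupp.lsum_single]
  simp

@[simp] lemma Delc_word (α β c : Letter) (l : List Letter) :
    Delc α β c (wordOf l) = DcWord α β c l := by
  rw [Delc, wordOf]; exact lsum_single_eval1 _ _

@[simp] lemma sh_word (p q : List Letter) :
    sh (wordOf p) (wordOf q) = shuffleWord p q := by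
  rw [sh, wordOf, wordOf]
  have h1 := lsum_single_eval1 (N := Az →ₗ[ℤ] Az) (f := fun u => (Finsupp.lsum ℤ fun v =>
      LinearMap.toSpanSingleton ℤ Az (shuffleWord (FreeMonoid.toList u) (FreeMonoid.toList v))) ∘ₗ (MonoidAlgebra.coeffLinearEquiv ℤ).toLinearMap)
      (FreeMonoid.ofList p)
  exact (LinearMap.congr_fun h1 (MonoidAlgebra.single (FreeMonoid.ofList q) 1)).trans
    (lsum_single_eval1 _ _)

@[simp] lemma Const_word (l : List Letter) :
    Const (wordOf l) = if (2:Letter) ∈ l then 0 else wordOf l := by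
  rw [Const, wordOf]
  exact lsum_single_eval1
    (f := fun w => if (2:Letter) ∈ FreeMonoid.toList w then 0 else wordOf (FreeMonoid.toList w)) _

@[simp] lemma word_cons_mul (a : Letter) (k : List Letter) :
    wordOf [a] * wordOf k = wordOf (a :: k) := by
  simp [wordOf, MonoidAlgebra.single_mul_single]

lemma extc_succ (c a : Letter) (l : List Letter) (j : ℕ) :
    extc c (a :: l) (j+1) = extc a l j := by
  simp [extc]

lemma extc_zero (c : Letter) (l : List Letter) : extc c l 0 = c := rfl

lemma extc_get (c : Letter) (l : List Letter) (i : ℕ) (h : i < l.length) :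
    extc c l (i+1) = l.getD i 1 := by
  simp only [extc, List.cons_append, List.getD_cons_succ]
  rw [List.getD_eq_getElem?_getD, List.getD_eq_getElem?_getD, List.getElem?_append]
  simp [h]

lemma extc_one_head (c : Letter) (l : List Letter) : extc c l 1 = l.headD 1 := by
  cases l <;> simp [extc]

lemma extc_last (c : Letter) (l : List Letter) : extc c l (l.length + 1) = 1 := by
  simp [extc, List.getD_append_right]

lemma DcWord_nil (α β c : Letter) : DcWord α β c [] = 0 := by simp [DcWord]

lemma DcWord_cons (α β c a : Letter) (l : List Letter) :
    DcWord α β c (a :: l) =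
      (dl α β a (l.headD 1) - dl α β c a) • wordOf l + wordOf [a] * DcWord α β a l := by
  simp only [DcWord]
  have hlen : (a :: l).length = l.length + 1 := rfl
  rw [hlen, Finset.sum_range_succ', add_comm]
  congr 1
  · have h1 : extc c (a :: l) 1 = a := by
      have := extc_succ c a l 0; rw [this, extc_zero]
    have h2 : extc c (a :: l) 2 = l.headD 1 := by
      have := extc_succ c a l 1; rw [this, extc_one_head]
    rw [h1, h2, extc_zero, List.eraseIdx_cons_zero]
  · rw [Finset.mul_sum]
    refine Finset.sum_congr rfl fun i hi => ?_
    rw [mul_smul_comm]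
    simp only [extc_succ, List.eraseIdx_cons_succ, word_cons_mul]

end Helper

section Helper2

lemma single_eq_smul_word (a : FreeMonoid Letter) (b : ℤ) :
    (MonoidAlgebra.single a b : Az) = b • wordOf (FreeMonoid.toList a) := by
  rw [wordOf]
  rw [show MonoidAlgebra.single (FreeMonoid.ofList (FreeMonoid.toList a)) (1:ℤ)
      = MonoidAlgebra.single a (1:ℤ) from rfl]
  rw [MonoidAlgebra.smul_single', mul_one]

lemma shuffleWord_nil_left (v : List Letter) : shuffleWord [] v = wordOf v := by
  rw [shuffleWord]

lemma shuffleWord_nil_right (u : List Letter) : shuffleWord u [] = wordOf u := by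
  cases u with
  | nil => rw [shuffleWord]
  | cons a u =>
      rw [shuffleWord]
      exact List.cons_ne_nil _ _

lemma shuffleWord_cons (a : Letter) (u : List Letter) (b : Letter) (v : List Letter) :
    shuffleWord (a :: u) (b :: v) =
      wordOf [a] * shuffleWord u (b :: v) + wordOf [b] * shuffleWord (a :: u) v := by
  rw [shuffleWord]

noncomputable def Gm (α β c a : Letter) : Az →ₗ[ℤ] Az :=
  (Finsupp.lsum ℤ fun w => LinearMap.toSpanSingleton ℤ Az
    ((dl α β a ((FreeMonoid.toList w).headD 1) - dl α β c a) • wordOf (FreeMonoid.toList w))) ∘ₗ (MonoidAlgebra.coeffLinearEquiv ℤ).toLinearMap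

lemma Gm_word (α β c a : Letter) (l : List Letter) :
    Gm α β c a (wordOf l) = (dl α β a (l.headD 1) - dl α β c a) • wordOf l := by
  rw [Gm, wordOf]; exact lsum_single_eval1 _ _

lemma sh_one_left (x : Az) : sh 1 x = x := by
  induction x using MonoidAlgebra.induction_linear with
  | zero => simp
  | add f g hf hg => rw [map_add, hf, hg]
  | single a b =>
      rw [single_eq_smul_word, map_smul]
      rw [show (1:Az) = wordOf [] from rfl, sh_word, shuffleWord_nil_left]

lemma sh_one_right (x : Az) : sh x 1 = x := by
  induction x using MonoidAlgebra.induction_linear with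
  | zero => rw [map_zero]; rfl
  | add f g hf hg => rw [map_add, LinearMap.add_apply, hf, hg]
  | single a b =>
      rw [single_eq_smul_word, map_smul, LinearMap.smul_apply]
      rw [show (1:Az) = wordOf [] from rfl, sh_word, shuffleWord_nil_right]

lemma Delc_mul (α β c a : Letter) (x : Az) :
    Delc α β c (wordOf [a] * x) = Gm α β c a x + wordOf [a] * Delc α β a x := by
  induction x using MonoidAlgebra.induction_linear with
  | zero => simp
  | add f g hf hg =>
      simp only [mul_add, map_add, hf, hg]
      abel
  | single w b =>
      simp only [single_eq_smul_word, mul_smul_comm, map_smul, word_cons_mul,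
        Delc_word, Gm_word, DcWord_cons, smul_add]

lemma Gm_mul (α β c a e : Letter) (x : Az) :
    Gm α β c a (wordOf [e] * x) = (dl α β a e - dl α β c a) • (wordOf [e] * x) := by
  induction x using MonoidAlgebra.induction_linear with
  | zero => simp
  | add f g hf hg => simp only [mul_add, map_add, hf, hg, smul_add]
  | single w b =>
      rw [single_eq_smul_word, mul_smul_comm, map_smul, word_cons_mul, Gm_word,
        List.headD_cons, smul_comm]

lemma sh_mul (a b : Letter) (x y : Az) :
    sh (wordOf [a] * x) (wordOf [b] * y) =
      wordOf [a] * sh x (wordOf [b] * y) + wordOf [b] * sh (wordOf [a] * x) y := by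
  induction x using MonoidAlgebra.induction_linear with
  | zero => simp
  | add f g hf hg =>
      simp only [mul_add, map_add, LinearMap.add_apply, hf, hg]
      abel
  | single w n =>
      induction y using MonoidAlgebra.induction_linear with
      | zero => simp
      | add f g hf hg =>
          simp only [mul_add, map_add, hf, hg]
          abel
      | single w' n' =>
          simp only [single_eq_smul_word, mul_smul_comm, map_smul, LinearMap.smul_apply,
            word_cons_mul, sh_word, shuffleWord_cons, smul_add, smul_smul]

end Helper2

section Derivation

lemma sh_nilword_left (x : Az) : sh (wordOf []) x = x := sh_one_left x
lemma sh_nilword_right (x : Az) : sh x (wordOf []) = x := sh_one_right x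

lemma Gm_shuffle_right (α β c a b : Letter) (u v : List Letter) :
    Gm α β c a (shuffleWord u (b :: v)) =
      (dl α β a (u.headD 1) - dl α β c a) • shuffleWord u (b :: v)
      + (dl α β a b - dl α β a (u.headD 1)) • (wordOf [b] * shuffleWord u v) := by
  cases u with
  | nil =>
      rw [shuffleWord_nil_left, shuffleWord_nil_left, Gm_word, word_cons_mul,
        List.headD_cons, ← add_smul]
      simp only [List.headD_nil]
      rw [show (dl α β a 1 - dl α β c a) + (dl α β a b - dl α β a 1)
          = dl α β a b - dl α β c a by ring]
  | cons e u' =>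
      rw [shuffleWord_cons, map_add, Gm_mul, Gm_mul, List.headD_cons]
      simp only [smul_add]
      module

lemma Gm_shuffle_left (α β c a b : Letter) (u v : List Letter) :
    Gm α β c b (shuffleWord (a :: u) v) =
      (dl α β b (v.headD 1) - dl α β c b) • shuffleWord (a :: u) v
      + (dl α β b a - dl α β b (v.headD 1)) • (wordOf [a] * shuffleWord u v) := by
  cases v with
  | nil =>
      rw [shuffleWord_nil_right, shuffleWord_nil_right, Gm_word, word_cons_mul,
        List.headD_cons, ← add_smul]
      simp only [List.headD_nil]
      rw [show (dl α β b 1 - dl α β c b) + (dl α β b a - dl α β b 1)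
          = dl α β b a - dl α β c b by ring]
  | cons f v' =>
      rw [shuffleWord_cons, map_add, Gm_mul, Gm_mul, List.headD_cons]
      simp only [smul_add]
      module

lemma Delc_shuffleWord (α β : Letter) :
    ∀ (n : ℕ) (u v : List Letter), u.length + v.length ≤ n → ∀ c,
    Delc α β c (shuffleWord u v)
      = sh (DcWord α β c u) (wordOf v) + sh (wordOf u) (DcWord α β c v) := by
  intro n
  induction n with
  | zero =>
      intro u v h c
      match u, v with
      | [], [] =>
          simp [shuffleWord_nil_left, DcWord_nil, sh_one_left, sh_nilword_left]
      | a :: u, v => simp at h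
      | [], b :: v => simp at h
  | succ n ih =>
      intro u v hlen c
      match u, v with
      | [], v =>
          simp [shuffleWord_nil_left, DcWord_nil, sh_nilword_left]
      | a :: u, [] =>
          simp [shuffleWord_nil_right, DcWord_nil, sh_nilword_right]
      | a :: u, b :: v =>
          have hu : u.length + (b :: v).length ≤ n := by
            simp only [List.length_cons] at hlen ⊢; omega
          have hv : (a :: u).length + v.length ≤ n := by
            simp only [List.length_cons] at hlen ⊢; omega
          have ih1 := ih u (b :: v) hu a
          have ih2 := ih (a :: u) v hv b
          rw [shuffleWord_cons, map_add, Delc_mul, Delc_mul, ih1, ih2]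
          rw [DcWord_cons α β c a, DcWord_cons α β c b, DcWord_cons α β a b,
            DcWord_cons α β b a]
          simp only [map_add, map_smul, LinearMap.add_apply, LinearMap.smul_apply,
            mul_add, mul_smul_comm, sh_word]
          rw [Gm_shuffle_right α β c a b u v, Gm_shuffle_left α β c a b u v]
          rw [← word_cons_mul b v, ← word_cons_mul a u]
          simp only [sh_mul, mul_add, mul_smul_comm, smul_add]
          simp only [dl_comm α β b a]
          module

end Derivation

section Chains

lemma Delc_sh (α β c : Letter) (x y : Az) :
    Delc α β c (sh x y) = sh (Delc α β c x) y + sh x (Delc α β c y) := by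
  induction x using MonoidAlgebra.induction_linear with
  | zero => simp
  | add f g hf hg =>
      simp only [map_add, LinearMap.add_apply, hf, hg]; abel
  | single w n =>
      induction y using MonoidAlgebra.induction_linear with
      | zero => simp
      | add f g hf hg =>
          simp only [map_add, LinearMap.add_apply, hf, hg]; abel
      | single w' n' =>
          simp only [single_eq_smul_word, map_smul, LinearMap.smul_apply, sh_word, Delc_word]
          rw [Delc_shuffleWord α β ((FreeMonoid.toList w).length + (FreeMonoid.toList w').length)
            (FreeMonoid.toList w) (FreeMonoid.toList w') le_rfl c]
          simp only [smul_add, smul_smul]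

def splits : List Letter → List (List Letter × List Letter)
  | [] => [([], [])]
  | d :: ds => (splits ds).flatMap fun p => [(d :: p.1, p.2), (p.1, d :: p.2)]

lemma list_sum_map_flatMap {γ δ M : Type*} [AddCommMonoid M] (l : List γ) (f : γ → List δ)
    (g : δ → M) : ((l.flatMap f).map g).sum = (l.map fun x => ((f x).map g).sum).sum := by
  induction l with
  | nil => simp
  | cons a l ih => simp [List.flatMap_cons, List.map_append, List.sum_append, ih]

lemma delChain_cons_apply (b : Letter) (bs : List Letter) (x : Az) :
    delChain (b :: bs) x = del 1 b (delChain bs x) := rfl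

lemma delChain_sh (bs : List Letter) (x y : Az) :
    delChain bs (sh x y)
      = ((splits bs).map fun p => sh (delChain p.1 x) (delChain p.2 y)).sum := by
  induction bs with
  | nil => simp [delChain, splits]
  | cons b bs ih =>
      rw [delChain_cons_apply, ih, map_list_sum, splits, list_sum_map_flatMap, List.map_map]
      congr 1
      refine List.map_congr_left fun p _ => ?_
      simp only [Function.comp_apply, del_eq, Delc_sh]
      simp [delChain_cons_apply, del_eq]

def interleave : List Letter → List Letter → List (List Letter)
  | [], v => [v]
  | u, [] => [u]
  | a :: u, b :: v => ((interleave u (b :: v)).map (a :: ·)) ++ ((interleave (a :: u) v).map (b :: ·))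
termination_by u v => u.length + v.length

lemma interleave_nil_left (v : List Letter) : interleave [] v = [v] := by rw [interleave]

lemma interleave_nil_right (u : List Letter) : interleave u [] = [u] := by
  cases u with
  | nil => rw [interleave]
  | cons a u => rw [interleave]; exact List.cons_ne_nil _ _

lemma interleave_cons (a : Letter) (u : List Letter) (b : Letter) (v : List Letter) :
    interleave (a :: u) (b :: v)
      = ((interleave u (b :: v)).map (a :: ·)) ++ ((interleave (a :: u) v).map (b :: ·)) := by
  rw [interleave]

lemma mul_list_sum (r : Az) (L : List Az) : r * L.sum = (L.map (r * ·)).sum := by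
  induction L with
  | nil => simp
  | cons x L ih => simp [mul_add, ih]

lemma shuffleWord_eq_sum : ∀ (n : ℕ) (u v : List Letter), u.length + v.length ≤ n →
    shuffleWord u v = ((interleave u v).map wordOf).sum := by
  intro n
  induction n with
  | zero =>
      intro u v h
      match u, v with
      | [], [] => simp [shuffleWord_nil_left, interleave_nil_left]
      | a :: u, v => simp at h
      | [], b :: v => simp at h
  | succ n ih =>
      intro u v hlen
      match u, v with
      | [], v => simp [shuffleWord_nil_left, interleave_nil_left]
      | a :: u, [] => simp [shuffleWord_nil_right, interleave_nil_right]
      | a :: u, b :: v =>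
          have hu : u.length + (b :: v).length ≤ n := by
            simp only [List.length_cons] at hlen ⊢; omega
          have hv : (a :: u).length + v.length ≤ n := by
            simp only [List.length_cons] at hlen ⊢; omega
          rw [shuffleWord_cons, ih u (b :: v) hu, ih (a :: u) v hv, interleave_cons,
            List.map_append, List.sum_append, mul_list_sum, mul_list_sum,
            List.map_map, List.map_map, List.map_map, List.map_map]
          congr 1 <;> exact congrArg _ (List.map_congr_left fun k _ => (word_cons_mul _ _))

lemma interleave_length : ∀ (n : ℕ) (u v b : List Letter), u.length + v.length ≤ n →
    b ∈ interleave u v → b.length = u.length + v.length := by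
  intro n
  induction n with
  | zero =>
      intro u v b h hb
      match u, v with
      | [], [] => simp [interleave_nil_left] at hb; simp [hb]
      | a :: u, v => simp at h
      | [], b' :: v => simp at h
  | succ n ih =>
      intro u v b hlen hb
      match u, v with
      | [], v => simp [interleave_nil_left] at hb; simp [hb]
      | a :: u, [] => simp [interleave_nil_right] at hb; simp [hb]
      | a :: u, b' :: v =>
          have hu : u.length + (b' :: v).length ≤ n := by
            simp only [List.length_cons] at hlen ⊢; omega
          have hv : (a :: u).length + v.length ≤ n := by
            simp only [List.length_cons] at hlen ⊢; omega
          rw [interleave_cons, List.mem_append] at hb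
          rcases hb with hb | hb <;> rw [List.mem_map] at hb <;>
            obtain ⟨k, hk, rfl⟩ := hb
          · have := ih u (b' :: v) k hu hk
            simp only [List.length_cons] at this ⊢; omega
          · have := ih (a :: u) v k hv hk
            simp only [List.length_cons] at this ⊢; omega

lemma interleave_mem : ∀ (n : ℕ) (u v b : List Letter) (x : Letter),
    u.length + v.length ≤ n → b ∈ interleave u v → (x ∈ b ↔ x ∈ u ∨ x ∈ v) := by
  intro n
  induction n with
  | zero =>
      intro u v b x h hb
      match u, v with
      | [], [] => simp [interleave_nil_left] at hb; simp [hb]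
      | a :: u, v => simp at h
      | [], b' :: v => simp at h
  | succ n ih =>
      intro u v b x hlen hb
      match u, v with
      | [], v => simp [interleave_nil_left] at hb; simp [hb]
      | a :: u, [] => simp [interleave_nil_right] at hb; simp [hb]
      | a :: u, b' :: v =>
          have hu : u.length + (b' :: v).length ≤ n := by
            simp only [List.length_cons] at hlen ⊢; omega
          have hv : (a :: u).length + v.length ≤ n := by
            simp only [List.length_cons] at hlen ⊢; omega
          rw [interleave_cons, List.mem_append] at hb
          rcases hb with hb | hb <;> rw [List.mem_map] at hb <;>
            obtain ⟨k, hk, rfl⟩ := hb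
          · have := ih u (b' :: v) k x hu hk
            simp only [List.mem_cons, this]
            tauto
          · have := ih (a :: u) v k x hv hk
            simp only [List.mem_cons, this]
            tauto

lemma Const_sh (x y : Az) : Const (sh x y) = sh (Const x) (Const y) := by
  induction x using MonoidAlgebra.induction_linear with
  | zero => simp
  | add f g hf hg => simp only [map_add, LinearMap.add_apply, hf, hg]
  | single w n =>
      induction y using MonoidAlgebra.induction_linear with
      | zero => simp
      | add f g hf hg => simp only [map_add, LinearMap.add_apply, hf, hg]
      | single w' n' =>
          simp only [single_eq_smul_word, map_smul, LinearMap.smul_apply]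
          set p := FreeMonoid.toList w
          set q := FreeMonoid.toList w'
          rw [sh_word, Const_word, Const_word,
            shuffleWord_eq_sum (p.length + q.length) p q le_rfl, map_list_sum, List.map_map]
          by_cases hp : (2 : Letter) ∈ p
          · rw [if_pos hp]
            have : ∀ z ∈ (interleave p q).map (Const ∘ wordOf), z = 0 := by
              intro z hz
              rw [List.mem_map] at hz
              obtain ⟨k, hk, rfl⟩ := hz
              have h2 : (2:Letter) ∈ k :=
                (interleave_mem (p.length + q.length) p q k 2 le_rfl hk).2 (Or.inl hp)
              simp [Const_word, h2]
            rw [List.sum_eq_zero this]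
            simp
          · by_cases hq : (2 : Letter) ∈ q
            · rw [if_pos hq, if_neg hp]
              have : ∀ z ∈ (interleave p q).map (Const ∘ wordOf), z = 0 := by
                intro z hz
                rw [List.mem_map] at hz
                obtain ⟨k, hk, rfl⟩ := hz
                have h2 : (2:Letter) ∈ k :=
                  (interleave_mem (p.length + q.length) p q k 2 le_rfl hk).2 (Or.inr hq)
                simp [Const_word, h2]
              rw [List.sum_eq_zero this]
              simp
            · rw [if_neg hp, if_neg hq, sh_word]
              rw [shuffleWord_eq_sum (p.length + q.length) p q le_rfl]
              have heq : (interleave p q).map (Const ∘ wordOf) = (interleave p q).map wordOf := by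
                refine List.map_congr_left fun k hk => ?_
                have h2 : (2:Letter) ∉ k := by
                  rw [interleave_mem (p.length + q.length) p q k 2 le_rfl hk]
                  tauto
                simp [Const_word, h2]
              rw [heq]

end Chains

section ShAlg

lemma shuffleWord_comm : ∀ (n : ℕ) (u v : List Letter), u.length + v.length ≤ n →
    shuffleWord u v = shuffleWord v u := by
  intro n
  induction n with
  | zero =>
      intro u v h
      match u, v with
      | [], [] => rfl
      | a :: u, v => simp at h
      | [], b :: v => simp at h
  | succ n ih =>
      intro u v hlen
      match u, v with
      | [], v => rw [shuffleWord_nil_left, shuffleWord_nil_right]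
      | a :: u, [] => rw [shuffleWord_nil_left, shuffleWord_nil_right]
      | a :: u, b :: v =>
          have hu : u.length + (b :: v).length ≤ n := by
            simp only [List.length_cons] at hlen ⊢; omega
          have hv : (a :: u).length + v.length ≤ n := by
            simp only [List.length_cons] at hlen ⊢; omega
          rw [shuffleWord_cons, shuffleWord_cons, ih u (b :: v) hu, ih (a :: u) v hv,
            add_comm]

lemma sh_comm (x y : Az) : sh x y = sh y x := by
  induction x using MonoidAlgebra.induction_linear with
  | zero => simp
  | add f g hf hg => simp only [map_add, LinearMap.add_apply, hf, hg]
  | single w n =>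
      induction y using MonoidAlgebra.induction_linear with
      | zero => simp
      | add f g hf hg => simp only [map_add, LinearMap.add_apply, hf, hg]
      | single w' n' =>
          simp only [single_eq_smul_word, map_smul, LinearMap.smul_apply, sh_word]
          rw [shuffleWord_comm ((FreeMonoid.toList w).length + (FreeMonoid.toList w').length)
            _ _ le_rfl, smul_comm]

lemma sh_shuffle_assoc : ∀ (n : ℕ) (u v w : List Letter),
    u.length + v.length + w.length ≤ n →
    sh (shuffleWord u v) (wordOf w) = sh (wordOf u) (shuffleWord v w) := by
  intro n
  induction n with
  | zero =>
      intro u v w h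
      match u, v, w with
      | [], [], [] => rw [shuffleWord_nil_left]
      | a :: u, v, w => simp at h
      | [], b :: v, w => simp at h
      | [], [], c :: w => simp at h
  | succ n ih =>
      intro u v w hlen
      match u, v, w with
      | [], v, w => rw [shuffleWord_nil_left, sh_nilword_left, sh_word]
      | u, [], w => rw [shuffleWord_nil_right, shuffleWord_nil_left, sh_word]
      | u, v, [] => rw [shuffleWord_nil_right, sh_nilword_right, sh_word]
      | a :: u, b :: v, c :: w =>
          have h1 : u.length + (b :: v).length + (c :: w).length ≤ n := by
            simp only [List.length_cons] at hlen ⊢; omega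
          have h2 : (a :: u).length + (b :: v).length + w.length ≤ n := by
            simp only [List.length_cons] at hlen ⊢; omega
          have h3 : (a :: u).length + v.length + (c :: w).length ≤ n := by
            simp only [List.length_cons] at hlen ⊢; omega
          have e1 := ih u (b :: v) (c :: w) h1
          have e2 := ih (a :: u) (b :: v) w h2
          have e3 := ih (a :: u) v (c :: w) h3
          have hE : (wordOf [a] * sh (wordOf u) (shuffleWord (b :: v) (c :: w))
              + wordOf [b] * sh (wordOf (a :: u)) (shuffleWord v (c :: w))
              + wordOf [c] * sh (wordOf (a :: u)) (shuffleWord (b :: v) w) : Az)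
              = wordOf [a] * sh (wordOf u) (shuffleWord (b :: v) (c :: w))
              + wordOf [b] * sh (wordOf [a] * wordOf u) (shuffleWord v (c :: w))
              + wordOf [c] * sh (wordOf [a] * wordOf u) (shuffleWord (b :: v) w) := by
            rw [word_cons_mul a u]
          have hL : sh (shuffleWord (a :: u) (b :: v)) (wordOf (c :: w))
              = wordOf [a] * sh (wordOf u) (shuffleWord (b :: v) (c :: w))
              + wordOf [b] * sh (wordOf (a :: u)) (shuffleWord v (c :: w))
              + wordOf [c] * sh (wordOf (a :: u)) (shuffleWord (b :: v) w) := by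
            rw [← e2, ← e1, ← e3]
            rw [shuffleWord_cons a u b v]
            rw [show wordOf (c :: w) = wordOf [c] * wordOf w from (word_cons_mul c w).symm]
            simp only [map_add, LinearMap.add_apply, sh_mul, mul_add]
            abel
          have hR : sh (wordOf (a :: u)) (shuffleWord (b :: v) (c :: w))
              = wordOf [a] * sh (wordOf u) (shuffleWord (b :: v) (c :: w))
              + wordOf [b] * sh (wordOf [a] * wordOf u) (shuffleWord v (c :: w))
              + wordOf [c] * sh (wordOf [a] * wordOf u) (shuffleWord (b :: v) w) := by
            conv_lhs => rw [shuffleWord_cons b v c w,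
              show wordOf (a :: u) = wordOf [a] * wordOf u from (word_cons_mul a u).symm]
            conv_rhs => rw [shuffleWord_cons b v c w]
            simp only [map_add, LinearMap.add_apply, sh_mul, mul_add]
            abel
          rw [hL, hR, hE]

lemma sh_assoc (x y z : Az) : sh (sh x y) z = sh x (sh y z) := by
  induction x using MonoidAlgebra.induction_linear with
  | zero => simp
  | add f g hf hg => simp only [map_add, LinearMap.add_apply, hf, hg]
  | single w n =>
      induction y using MonoidAlgebra.induction_linear with
      | zero => simp
      | add f g hf hg => simp only [map_add, LinearMap.add_apply, hf, hg]
      | single w' n' =>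
          induction z using MonoidAlgebra.induction_linear with
          | zero => simp
          | add f g hf hg => simp only [map_add, LinearMap.add_apply, hf, hg]
          | single w'' n'' =>
              simp only [single_eq_smul_word, map_smul, LinearMap.smul_apply, sh_word]
              rw [sh_shuffle_assoc ((FreeMonoid.toList w).length + (FreeMonoid.toList w').length
                + (FreeMonoid.toList w'').length) _ _ _ le_rfl]

end ShAlg

section Grading

noncomputable def Lspan (n : ℕ) : Submodule ℤ Az :=
  Submodule.span ℤ {x | ∃ l : List Letter, l.length = n ∧ x = wordOf l}

lemma word_mem_Lspan (l : List Letter) : wordOf l ∈ Lspan l.length :=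
  Submodule.subset_span ⟨l, rfl, rfl⟩

lemma DcWord_mem_Lspan (α β c : Letter) (l : List Letter) (n : ℕ) (h : l.length = n + 1) :
    DcWord α β c l ∈ Lspan n := by
  rw [DcWord]
  refine Submodule.sum_mem _ fun i hi => Submodule.smul_mem _ _
    (Submodule.subset_span ⟨l.eraseIdx i, ?_, rfl⟩)
  rw [Finset.mem_range] at hi
  rw [List.length_eraseIdx, if_pos hi]
  omega

lemma Delc_mem_Lspan (α β c : Letter) (n : ℕ) {x : Az} (h : x ∈ Lspan (n + 1)) :
    Delc α β c x ∈ Lspan n := by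
  induction h using Submodule.span_induction with
  | mem y hy =>
      obtain ⟨l, hl, rfl⟩ := hy
      rw [Delc_word]
      exact DcWord_mem_Lspan α β c l n hl
  | zero => simp
  | add y z _ _ hy hz => rw [map_add]; exact Submodule.add_mem _ hy hz
  | smul n y _ hy => rw [map_smul]; exact Submodule.smul_mem _ _ hy

lemma Delc_Lspan_zero (α β c : Letter) {x : Az} (h : x ∈ Lspan 0) : Delc α β c x = 0 := by
  induction h using Submodule.span_induction with
  | mem y hy =>
      obtain ⟨l, hl, rfl⟩ := hy
      rw [List.length_eq_zero_iff] at hl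
      subst hl
      rw [Delc_word, DcWord_nil]
  | zero => simp
  | add y z _ _ hy hz => rw [map_add, hy, hz, add_zero]
  | smul n y _ hy => rw [map_smul, hy, smul_zero]

lemma delChain_mem_Lspan : ∀ (bs : List Letter) (k : ℕ) (x : Az),
    x ∈ Lspan (k + bs.length) → delChain bs x ∈ Lspan k := by
  intro bs
  induction bs with
  | nil => intro k x h; simpa [delChain] using h
  | cons b bs ih =>
      intro k x h
      rw [delChain_cons_apply, del_eq]
      refine Delc_mem_Lspan 1 b 0 k (ih (k+1) x ?_)
      convert h using 2
      simp
      omega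

lemma delChain_zero : ∀ (bs : List Letter) (n : ℕ) (x : Az),
    x ∈ Lspan n → n < bs.length → delChain bs x = 0 := by
  intro bs
  induction bs with
  | nil => intro n x _ h; simp at h
  | cons b bs ih =>
      intro n x hx hlen
      rw [delChain_cons_apply]
      by_cases hn : n < bs.length
      · rw [ih n x hx hn, map_zero]
      · have hnb : n = bs.length := by simp at hlen; omega
        subst hnb
        have : delChain bs x ∈ Lspan 0 := delChain_mem_Lspan bs 0 x (by simpa using hx)
        rw [del_eq]
        exact Delc_Lspan_zero 1 b 0 this

lemma tuples_length : ∀ (r : ℕ) (b : List Letter), b ∈ tuples r → b.length = r := by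
  intro r
  induction r with
  | zero => intro b hb; simp [tuples] at hb; simp [hb]
  | succ r ih =>
      intro b hb
      rw [show tuples (r+1) = (tuples r).flatMap
        (fun t => [(0:Letter) :: t, (2:Letter) :: t]) from rfl, List.mem_flatMap] at hb
      obtain ⟨t, ht, hb⟩ := hb
      have := ih t ht
      simp only [List.mem_cons, List.mem_singleton, List.not_mem_nil, or_false] at hb
      rcases hb with rfl | rfl <;> simp [this]

lemma tuples_letters : ∀ (r : ℕ) (b : List Letter), b ∈ tuples r →
    ∀ x ∈ b, x = 0 ∨ x = 2 := by
  intro r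
  induction r with
  | zero => intro b hb; simp [tuples] at hb; simp [hb]
  | succ r ih =>
      intro b hb x hx
      rw [show tuples (r+1) = (tuples r).flatMap
        (fun t => [(0:Letter) :: t, (2:Letter) :: t]) from rfl, List.mem_flatMap] at hb
      obtain ⟨t, ht, hb⟩ := hb
      simp at hb
      rcases hb with hb | hb <;> subst hb <;> rcases List.mem_cons.1 hx with h | h
      · left; exact h
      · exact ih t ht x h
      · right; exact h
      · exact ih t ht x h

lemma phiSh_word (l : List Letter) : phiSh (wordOf l) = phiShWord l := by
  rw [phiSh, wordOf]; exact lsum_single_eval1 _ _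

lemma delChain_word_long (b l : List Letter) (h : l.length < b.length) :
    delChain b (wordOf l) = 0 :=
  delChain_zero b l.length (wordOf l) (word_mem_Lspan l) h

noncomputable def PhiN (N : ℕ) (x : Az) : Az :=
  ∑ r ∈ Finset.range (N+1), ((tuples r).map fun b => sh (Const (delChain b x)) (wordOf b)).sum

lemma PhiN_word (N : ℕ) (l : List Letter) (h : l.length ≤ N) :
    PhiN N (wordOf l) = phiShWord l := by
  rw [PhiN, phiShWord]
  symm
  refine Finset.sum_subset (Finset.range_subset_range.2 (by omega)) fun r _ hr => ?_
  rw [Finset.mem_range, not_lt] at hr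
  refine List.sum_eq_zero fun z hz => ?_
  rw [List.mem_map] at hz
  obtain ⟨b, hb, rfl⟩ := hz
  rw [delChain_word_long b l (by rw [tuples_length r b hb]; omega)]
  simp

end Grading

section IDCsec

variable {M : Type} [AddCommMonoid M]

/-- inner interleave sum -/
def ilsum (g : List Letter → List Letter → List Letter → M) (s t : List Letter) : M :=
  ((interleave s t).map (g s t)).sum

def Wm (g : List Letter → List Letter → List Letter → M) (j m : ℕ) : M :=
  ((tuples j).map fun s => ((tuples m).map fun t => ilsum g s t).sum).sum

def Qm (g : List Letter → List Letter → List Letter → M) (r : ℕ) : M :=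
  ∑ j ∈ Finset.range (r+1), Wm g j (r-j)

def Pm (g : List Letter → List Letter → List Letter → M) (r : ℕ) : M :=
  ((tuples r).map fun b => ((splits b).map fun p => g p.1 p.2 b).sum).sum

def Lf (d : Letter) (g : List Letter → List Letter → List Letter → M) :
    List Letter → List Letter → List Letter → M := fun s t b => g (d :: s) t (d :: b)

def Rf (d : Letter) (g : List Letter → List Letter → List Letter → M) :
    List Letter → List Letter → List Letter → M := fun s t b => g s (d :: t) (d :: b)

lemma tuples_succ (r : ℕ) :
    tuples (r+1) = (tuples r).flatMap fun t => [(0:Letter) :: t, (2:Letter) :: t] := rfl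

lemma splits_cons (d : Letter) (ds : List Letter) :
    splits (d :: ds) = (splits ds).flatMap fun p => [(d :: p.1, p.2), (p.1, d :: p.2)] := rfl

lemma h2sum (f : List Letter → M) (x y : List Letter) :
    (([x, y]).map f).sum = f x + f y := by simp

lemma Prec (g : List Letter → List Letter → List Letter → M) (r : ℕ) :
    Pm g (r+1) = (Pm (Lf 0 g) r + Pm (Rf 0 g) r) + (Pm (Lf 2 g) r + Pm (Rf 2 g) r) := by
  unfold Pm
  rw [tuples_succ, list_sum_map_flatMap]
  have hF : ∀ (d : Letter) (b : List Letter),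
      ((splits (d :: b)).map fun p => g p.1 p.2 (d :: b)).sum
        = ((splits b).map fun p => Lf d g p.1 p.2 b).sum
          + ((splits b).map fun p => Rf d g p.1 p.2 b).sum := by
    intro d b
    rw [splits_cons, list_sum_map_flatMap, ← List.sum_map_add]
    refine congrArg _ (List.map_congr_left fun p _ => ?_)
    simp [Lf, Rf]
  have : ∀ b : List Letter,
      (([(0:Letter) :: b, (2:Letter) :: b]).map fun b' =>
        ((splits b').map fun p => g p.1 p.2 b').sum).sum
      = (((splits b).map fun p => Lf 0 g p.1 p.2 b).sum
          + ((splits b).map fun p => Rf 0 g p.1 p.2 b).sum)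
        + (((splits b).map fun p => Lf 2 g p.1 p.2 b).sum
          + ((splits b).map fun p => Rf 2 g p.1 p.2 b).sum) := by
    intro b
    rw [h2sum, hF 0 b, hF 2 b]
  rw [List.map_congr_left fun b _ => this b]
  rw [List.sum_map_add, List.sum_map_add, List.sum_map_add]

lemma interleave_decomp_cons (d : Letter) (s : List Letter) (e : Letter) (t : List Letter)
    (f : List Letter → M) :
    ((interleave (d :: s) (e :: t)).map f).sum
      = ((interleave s (e :: t)).map fun k => f (d :: k)).sum
        + ((interleave (d :: s) t).map fun k => f (e :: k)).sum := by
  rw [interleave_cons, List.map_append, List.sum_append, List.map_map, List.map_map]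
  rfl

lemma interleave_decomp_nil (d : Letter) (s : List Letter) (f : List Letter → M) :
    ((interleave (d :: s) []).map f).sum
      = ((interleave s []).map fun k => f (d :: k)).sum := by
  rw [interleave_nil_right, interleave_nil_right]
  simp

/-- the `Y` remainder term -/
def Ypiece (d : Letter) (g : List Letter → List Letter → List Letter → M)
    (s' : List Letter) : List Letter → M
  | [] => 0
  | e :: t' => ((interleave (d :: s') t').map fun k => g (d :: s') (e :: t') (e :: k)).sum

def Ym (d : Letter) (g : List Letter → List Letter → List Letter → M) (j m : ℕ) : M :=
  ((tuples j).map fun s' => ((tuples m).map fun t => Ypiece d g s' t).sum).sum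

def Vm (d e : Letter) (g : List Letter → List Letter → List Letter → M) (j m : ℕ) : M :=
  ((tuples j).map fun s' => ((tuples m).map fun t' =>
    ((interleave (d :: s') t').map fun k => g (d :: s') (e :: t') (e :: k)).sum).sum).sum

lemma hWsucc (g : List Letter → List Letter → List Letter → M) (j m : ℕ) :
    Wm g (j+1) m = ((Wm (Lf 0 g) j m + Ym 0 g j m) + (Wm (Lf 2 g) j m + Ym 2 g j m)) := by
  unfold Wm Ym
  rw [tuples_succ, list_sum_map_flatMap]
  have key : ∀ (d : Letter) (s' : List Letter),
      ((tuples m).map fun t => ilsum g (d :: s') t).sum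
        = ((tuples m).map fun t => ilsum (Lf d g) s' t).sum
          + ((tuples m).map fun t => Ypiece d g s' t).sum := by
    intro d s'
    rw [← List.sum_map_add]
    refine congrArg _ (List.map_congr_left fun t _ => ?_)
    cases t with
    | nil =>
        rw [ilsum, interleave_decomp_nil d s' (g (d :: s') [])]
        rw [show Ypiece d g s' [] = 0 from rfl, add_zero]
        rfl
    | cons e t' =>
        rw [ilsum, interleave_decomp_cons d s' e t' (g (d :: s') (e :: t'))]
        rfl
  have : ∀ s' : List Letter,
      (([(0:Letter) :: s', (2:Letter) :: s']).map fun s =>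
        ((tuples m).map fun t => ilsum g s t).sum).sum
      = (((tuples m).map fun t => ilsum (Lf 0 g) s' t).sum
          + ((tuples m).map fun t => Ypiece 0 g s' t).sum)
        + (((tuples m).map fun t => ilsum (Lf 2 g) s' t).sum
          + ((tuples m).map fun t => Ypiece 2 g s' t).sum) := by
    intro s'
    rw [h2sum, key 0 s', key 2 s']
  rw [List.map_congr_left fun s' _ => this s']
  rw [List.sum_map_add, List.sum_map_add, List.sum_map_add]

lemma hY0 (d : Letter) (g : List Letter → List Letter → List Letter → M) (j : ℕ) :
    Ym d g j 0 = 0 := by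
  unfold Ym
  refine List.sum_eq_zero fun z hz => ?_
  rw [List.mem_map] at hz
  obtain ⟨s', _, rfl⟩ := hz
  rw [show tuples 0 = [[]] from rfl]
  simp [Ypiece]

lemma hYsucc (d : Letter) (g : List Letter → List Letter → List Letter → M) (j m : ℕ) :
    Ym d g j (m+1) = Vm d 0 g j m + Vm d 2 g j m := by
  unfold Ym Vm
  rw [← List.sum_map_add]
  refine congrArg _ (List.map_congr_left fun s' _ => ?_)
  rw [tuples_succ, list_sum_map_flatMap, ← List.sum_map_add]
  refine congrArg _ (List.map_congr_left fun t' _ => ?_)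
  rw [h2sum]
  rfl

lemma hRsucc (e : Letter) (g : List Letter → List Letter → List Letter → M) (j m : ℕ) :
    Wm (Rf e g) (j+1) m = Vm 0 e g j m + Vm 2 e g j m := by
  unfold Wm Vm
  rw [tuples_succ, list_sum_map_flatMap, ← List.sum_map_add]
  refine congrArg _ (List.map_congr_left fun s' _ => ?_)
  rw [h2sum]
  rfl

lemma hW0succ (g : List Letter → List Letter → List Letter → M) (m : ℕ) :
    Wm g 0 (m+1) = Wm (Rf 0 g) 0 m + Wm (Rf 2 g) 0 m := by
  unfold Wm
  rw [show tuples 0 = [[]] from rfl]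
  simp only [List.map_cons, List.map_nil, List.sum_cons, List.sum_nil, add_zero]
  rw [tuples_succ, list_sum_map_flatMap, ← List.sum_map_add]
  refine congrArg _ (List.map_congr_left fun t' _ => ?_)
  rw [h2sum]
  simp only [ilsum, interleave_nil_left, List.map_cons, List.map_nil, List.sum_cons,
    List.sum_nil, add_zero]
  rfl

lemma Qrec (g : List Letter → List Letter → List Letter → M) (r : ℕ) :
    Qm g (r+1) = (Qm (Lf 0 g) r + Qm (Rf 0 g) r) + (Qm (Lf 2 g) r + Qm (Rf 2 g) r) := by
  unfold Qm
  rw [Finset.sum_range_succ']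
  simp only [Nat.succ_sub_succ_eq_sub, Nat.sub_zero]
  -- expand Wm g (j+1) (r-j)
  rw [Finset.sum_congr rfl fun j _ => hWsucc g j (r-j)]
  simp only [Finset.sum_add_distrib]
  -- Y sums
  have hYsum : ∀ d : Letter, ∑ j ∈ Finset.range (r+1), Ym d g j (r-j)
      = ∑ j ∈ Finset.range r, (Vm d 0 g j (r-1-j) + Vm d 2 g j (r-1-j)) := by
    intro d
    rw [Finset.sum_range_succ, Nat.sub_self, hY0, add_zero]
    refine Finset.sum_congr rfl fun j hj => ?_
    rw [Finset.mem_range] at hj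
    rw [show r - j = (r-1-j) + 1 by omega, hYsucc]
  -- R sums
  have hRsum : ∀ e : Letter, ∑ j ∈ Finset.range (r+1), Wm (Rf e g) j (r-j)
      = ∑ j ∈ Finset.range r, (Vm 0 e g j (r-1-j) + Vm 2 e g j (r-1-j))
        + Wm (Rf e g) 0 r := by
    intro e
    rw [Finset.sum_range_succ']
    simp only [Nat.succ_sub_succ_eq_sub, Nat.sub_zero]
    congr 1
    refine Finset.sum_congr rfl fun j hj => ?_
    rw [Finset.mem_range] at hj
    rw [show r - (j + 1) = r - 1 - j by omega, hRsucc]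
  rw [hYsum 0, hYsum 2, hRsum 0, hRsum 2, hW0succ]
  simp only [Finset.sum_add_distrib]
  abel

lemma PQbase (g : List Letter → List Letter → List Letter → M) : Pm g 0 = Qm g 0 := by
  unfold Pm Qm Wm
  simp [ilsum, interleave_nil_left, show splits [] = [([], [])] from rfl,
    show tuples 0 = [[]] from rfl]

lemma IDC : ∀ (r : ℕ) (g : List Letter → List Letter → List Letter → M), Pm g r = Qm g r := by
  intro r
  induction r with
  | zero => exact fun g => PQbase g
  | succ r ih =>
      intro g
      rw [Prec, Qrec, ih, ih, ih, ih]

end IDCsec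

section Assembly

lemma list_sum_fin_swap {γ : Type} {M : Type} [AddCommMonoid M] (K : List γ)
    (s : Finset ℕ) (g : ℕ → γ → M) :
    (K.map fun k => ∑ r ∈ s, g r k).sum = ∑ r ∈ s, (K.map (g r)).sum := by
  induction K with
  | nil => simp
  | cons a K ih => simp [ih, Finset.sum_add_distrib]

lemma list_sum_swap {γ δ : Type} {M : Type} [AddCommMonoid M] (K : List γ) (L : List δ)
    (g : γ → δ → M) :
    (K.map fun k => (L.map (g k)).sum).sum = (L.map fun b => (K.map fun k => g k b).sum).sum := by
  induction K with
  | nil =>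
      simp only [List.map_nil, List.sum_nil]
      rw [List.sum_eq_zero]
      intro z hz
      rw [List.mem_map] at hz
      obtain ⟨b, _, rfl⟩ := hz
      simp
  | cons a K ih =>
      simp only [List.map_cons, List.sum_cons, ih, ← List.sum_map_add]

lemma sh_list_sum_left {γ : Type} (K : List γ) (f : γ → Az) (y : Az) :
    sh ((K.map f).sum) y = (K.map fun k => sh (f k) y).sum := by
  induction K with
  | nil => simp
  | cons a K ih => simp [map_add, LinearMap.add_apply, ih]

lemma sh_list_sum_right {γ : Type} (x : Az) (K : List γ) (f : γ → Az) :
    sh x ((K.map f).sum) = (K.map fun k => sh x (f k)).sum := by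
  rw [map_list_sum, List.map_map]
  rfl

lemma sh_rearrange (A B : Az) (s t : List Letter) :
    sh (sh A (wordOf s)) (sh B (wordOf t)) = sh (sh A B) (shuffleWord s t) := by
  rw [← sh_word s t, sh_assoc, ← sh_assoc (wordOf s) B (wordOf t),
    sh_comm (wordOf s) B, sh_assoc B (wordOf s) (wordOf t), ← sh_assoc A B]

lemma tri_rect {M : Type} [AddCommMonoid M] (S : ℕ → ℕ → M) (N1 N2 : ℕ)
    (h1 : ∀ j k, N1 < j → S j k = 0) (h2 : ∀ j k, N2 < k → S j k = 0) :
    ∑ r ∈ Finset.range (N1+N2+1), ∑ j ∈ Finset.range (r+1), S j (r-j)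
      = ∑ j ∈ Finset.range (N1+1), ∑ k ∈ Finset.range (N2+1), S j k := by
  set N := N1 + N2 with hN
  have e1 : ∑ r ∈ Finset.range (N+1), ∑ j ∈ Finset.range (r+1), S j (r-j)
      = ∑ q ∈ (Finset.range (N+1) ×ˢ Finset.range (N+1)).filter (fun q => q.1 + q.2 ≤ N),
          S q.1 q.2 := by
    rw [Finset.sum_sigma']
    refine Finset.sum_nbij' (fun x => (x.2, x.1 - x.2)) (fun q => ⟨q.1 + q.2, q.1⟩)
      ?_ ?_ ?_ ?_ ?_
    · intro x hx
      simp only [Finset.mem_sigma, Finset.mem_range] at hx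
      simp only [Finset.mem_filter, Finset.mem_product, Finset.mem_range]
      omega
    · intro q hq
      simp only [Finset.mem_filter, Finset.mem_product, Finset.mem_range] at hq
      simp only [Finset.mem_sigma, Finset.mem_range]
      omega
    · rintro ⟨r, j⟩ hx
      simp only [Finset.mem_sigma, Finset.mem_range] at hx
      have h : j + (r - j) = r := by omega
      simp only [h]
    · intro q hq
      simp
    · intro x hx
      rfl
  have e2 : ∑ q ∈ (Finset.range (N+1) ×ˢ Finset.range (N+1)).filter (fun q => q.1 + q.2 ≤ N),
        S q.1 q.2
      = ∑ q ∈ Finset.range (N+1) ×ˢ Finset.range (N+1), S q.1 q.2 := by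
    refine Finset.sum_subset (Finset.filter_subset _ _) fun q hq hq' => ?_
    simp only [Finset.mem_filter, Finset.mem_product, Finset.mem_range] at hq hq'
    have : N1 < q.1 ∨ N2 < q.2 := by omega
    rcases this with h | h
    · exact h1 q.1 q.2 h
    · exact h2 q.1 q.2 h
  have e3 : ∑ q ∈ Finset.range (N1+1) ×ˢ Finset.range (N2+1), S q.1 q.2
      = ∑ q ∈ Finset.range (N+1) ×ˢ Finset.range (N+1), S q.1 q.2 := by
    refine Finset.sum_subset (Finset.product_subset_product ?_ ?_) fun q hq hq' => ?_
    · exact Finset.range_subset_range.2 (by omega)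
    · exact Finset.range_subset_range.2 (by omega)
    · simp only [Finset.mem_product, Finset.mem_range] at hq hq'
      have : N1 < q.1 ∨ N2 < q.2 := by omega
      rcases this with h | h
      · exact h1 q.1 q.2 h
      · exact h2 q.1 q.2 h
  rw [e1, e2, ← e3, Finset.sum_product]

lemma phiSh_sh_word (p q : List Letter) :
    phiSh (sh (wordOf p) (wordOf q)) = sh (phiSh (wordOf p)) (phiSh (wordOf q)) := by
  classical
  set N1 := p.length with hN1
  set N2 := q.length with hN2
  -- the bilinear summand
  set g : List Letter → List Letter → List Letter → Az := fun s t b =>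
    sh (sh (Const (delChain s (wordOf p))) (Const (delChain t (wordOf q)))) (wordOf b)
    with hg
  -- Step A : LHS as iterated sum over chains applied to the shuffle
  have stepA : phiSh (sh (wordOf p) (wordOf q))
      = ∑ r ∈ Finset.range (N1+N2+1),
          ((tuples r).map fun b =>
            sh (Const (delChain b (shuffleWord p q))) (wordOf b)).sum := by
    rw [sh_word, shuffleWord_eq_sum (N1+N2) p q le_rfl, map_list_sum, List.map_map]
    have h1 : (interleave p q).map (phiSh ∘ wordOf)
        = (interleave p q).map (fun k => PhiN (N1+N2) (wordOf k)) := by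
      refine List.map_congr_left fun k hk => ?_
      have hlen := interleave_length (N1+N2) p q k le_rfl hk
      simp only [Function.comp_apply]
      rw [phiSh_word, PhiN_word (N1+N2) k (by omega)]
    rw [h1]
    simp only [PhiN]
    rw [list_sum_fin_swap]
    refine Finset.sum_congr rfl fun r _ => ?_
    rw [list_sum_swap]
    refine congrArg _ (List.map_congr_left fun b _ => ?_)
    have : ∀ K : List (List Letter),
        (K.map fun k => sh (Const (delChain b (wordOf k))) (wordOf b)).sum
          = sh (Const (delChain b ((K.map wordOf).sum))) (wordOf b) := by
      intro K
      induction K with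
      | nil => simp
      | cons a K ih => simp [map_add, LinearMap.add_apply, ih]
    rw [this, ← shuffleWord_eq_sum (N1+N2) p q le_rfl]
  -- Step B : expand chains over the shuffle via the derivation property
  have stepB : ∀ b : List Letter,
      sh (Const (delChain b (shuffleWord p q))) (wordOf b)
        = ((splits b).map fun pr => g pr.1 pr.2 b).sum := by
    intro b
    rw [← sh_word, delChain_sh, map_list_sum, List.map_map, sh_list_sum_left]
    refine congrArg _ (List.map_congr_left fun pr _ => ?_)
    simp only [Function.comp_apply, hg]
    rw [Const_sh]
  -- combine: LHS = ∑ Pm g r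
  have stepAB : phiSh (sh (wordOf p) (wordOf q)) = ∑ r ∈ Finset.range (N1+N2+1), Pm g r := by
    rw [stepA]
    refine Finset.sum_congr rfl fun r _ => ?_
    rw [Pm]
    exact congrArg _ (List.map_congr_left fun b _ => stepB b)
  -- ilsum computation
  have hilsum : ∀ s t : List Letter, ilsum g s t
      = sh (sh (Const (delChain s (wordOf p))) (Const (delChain t (wordOf q))))
          (shuffleWord s t) := by
    intro s t
    rw [ilsum, hg]
    rw [shuffleWord_eq_sum (s.length + t.length) s t le_rfl, sh_list_sum_right]
  -- vanishing of Wm beyond the rectangle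
  have hv1 : ∀ j k : ℕ, N1 < j → Wm g j k = 0 := by
    intro j k hj
    rw [Wm]
    refine List.sum_eq_zero fun z hz => ?_
    rw [List.mem_map] at hz
    obtain ⟨s, hs, rfl⟩ := hz
    refine List.sum_eq_zero fun z hz => ?_
    rw [List.mem_map] at hz
    obtain ⟨t, _, rfl⟩ := hz
    rw [hilsum, delChain_word_long s p (by rw [tuples_length j s hs]; omega)]
    simp
  have hv2 : ∀ j k : ℕ, N2 < k → Wm g j k = 0 := by
    intro j k hk
    rw [Wm]
    refine List.sum_eq_zero fun z hz => ?_
    rw [List.mem_map] at hz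
    obtain ⟨s, _, rfl⟩ := hz
    refine List.sum_eq_zero fun z hz => ?_
    rw [List.mem_map] at hz
    obtain ⟨t, ht, rfl⟩ := hz
    rw [hilsum, delChain_word_long t q (by rw [tuples_length k t ht]; omega)]
    simp
  -- RHS as rectangle sum of Wm
  have sh_sum_sum : ∀ (s t : Finset ℕ) (A B : ℕ → Az),
      sh (∑ i ∈ s, A i) (∑ j ∈ t, B j) = ∑ i ∈ s, ∑ j ∈ t, sh (A i) (B j) := by
    intro s t A B
    calc sh (∑ i ∈ s, A i) (∑ j ∈ t, B j)
        = ∑ j ∈ t, sh (∑ i ∈ s, A i) (B j) := map_sum _ _ _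
      _ = ∑ j ∈ t, ∑ i ∈ s, sh (A i) (B j) := Finset.sum_congr rfl fun j _ => by
            rw [show sh (∑ i ∈ s, A i) = ∑ i ∈ s, sh (A i) from map_sum _ _ _,
              LinearMap.sum_apply]
      _ = ∑ i ∈ s, ∑ j ∈ t, sh (A i) (B j) := Finset.sum_comm
  have stepR : sh (phiSh (wordOf p)) (phiSh (wordOf q))
      = ∑ j ∈ Finset.range (N1+1), ∑ k ∈ Finset.range (N2+1), Wm g j k := by
    rw [phiSh_word, phiSh_word, phiShWord, phiShWord, sh_sum_sum]
    refine Finset.sum_congr rfl fun r1 _ => Finset.sum_congr rfl fun r2 _ => ?_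
    rw [sh_list_sum_left, Wm]
    refine congrArg _ (List.map_congr_left fun s _ => ?_)
    rw [sh_list_sum_right]
    refine congrArg _ (List.map_congr_left fun t _ => ?_)
    rw [sh_rearrange]
    exact (hilsum s t).symm
  rw [stepAB, stepR]
  rw [Finset.sum_congr rfl fun r _ => IDC r g]
  unfold Qm
  exact tri_rect (Wm g) N1 N2 hv1 hv2

lemma phiSh_sh (x y : Az) : phiSh (sh x y) = sh (phiSh x) (phiSh y) := by
  induction x using MonoidAlgebra.induction_linear with
  | zero => simp
  | add f g hf hg => simp only [map_add, LinearMap.add_apply, hf, hg]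
  | single w n =>
      induction y using MonoidAlgebra.induction_linear with
      | zero => simp
      | add f g hf hg => simp only [map_add, LinearMap.add_apply, hf, hg]
      | single w' n' =>
          simp only [single_eq_smul_word, map_smul, LinearMap.smul_apply]
          rw [phiSh_sh_word]

end Assembly

section Part1

/-- allowedness of a word for `Az0` -/
def Allowed (l : List Letter) : Prop :=
  l = [] ∨ (l.head? ≠ some 0 ∧ l.getLast? ≠ some 1)

lemma word_mem_Az0 {l : List Letter} (h : Allowed l) : wordOf l ∈ Az0 :=
  Submodule.subset_span ⟨l, h, rfl⟩

lemma getLast?_cons_of_ne (a : Letter) {k : List Letter} (h : k ≠ []) :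
    (a :: k).getLast? = k.getLast? := by
  cases k with
  | nil => exact absurd rfl h
  | cons x t => exact List.getLast?_cons_cons

lemma eraseIdx_head? (l : List Letter) (i : ℕ) (h1 : 1 ≤ i) :
    (l.eraseIdx i).head? = l.head? := by
  cases l with
  | nil => simp
  | cons a t =>
      cases i with
      | zero => omega
      | succ j => rw [List.eraseIdx_cons_succ]; rfl

lemma eraseIdx_getLast? : ∀ (l : List Letter) (i : ℕ), i + 1 < l.length →
    (l.eraseIdx i).getLast? = l.getLast? := by
  intro l
  induction l with
  | nil => intro i h; simp at h
  | cons a t ih =>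
      intro i h
      have ht : t ≠ [] := by
        intro hh; subst hh; simp at h
      cases i with
      | zero =>
          rw [List.eraseIdx_cons_zero, getLast?_cons_of_ne a ht]
      | succ j =>
          rw [List.eraseIdx_cons_succ]
          have hj : j + 1 < t.length := by simp at h; omega
          have hne : t.eraseIdx j ≠ [] := by
            have : (t.eraseIdx j).length = t.length - 1 := by
              rw [List.length_eraseIdx, if_pos (by omega)]
            intro hh
            rw [hh] at this
            simp at this
            omega
          rw [getLast?_cons_of_ne a hne, getLast?_cons_of_ne a ht, ih j hj]

lemma eraseIdx_last_getLast? : ∀ (l : List Letter), 2 ≤ l.length →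
    (l.eraseIdx (l.length - 1)).getLast? = l[l.length - 2]? := by
  intro l
  induction l with
  | nil => intro h; simp at h
  | cons a t ih =>
      intro h
      have ht : 1 ≤ t.length := by simp at h; omega
      have h1 : (a :: t).length - 1 = (t.length - 1) + 1 := by simp; omega
      rw [h1, List.eraseIdx_cons_succ]
      by_cases h2 : 2 ≤ t.length
      · have hne : t.eraseIdx (t.length - 1) ≠ [] := by
          have : (t.eraseIdx (t.length - 1)).length = t.length - 1 := by
            rw [List.length_eraseIdx, if_pos (by omega)]
          intro hh
          rw [hh] at this
          simp at this
          omega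
        rw [getLast?_cons_of_ne a hne, ih h2]
        have h3 : (a :: t).length - 2 = (t.length - 2) + 1 := by simp; omega
        rw [h3, List.getElem?_cons_succ]
      · have ht1 : t.length = 1 := by omega
        obtain ⟨x, hx⟩ : ∃ x, t = [x] := by
          cases t with
          | nil => simp at ht1
          | cons y s =>
              cases s with
              | nil => exact ⟨y, rfl⟩
              | cons z s' => simp at ht1
        subst hx
        simp

lemma eraseIdx_eq_of_adj (l : List Letter) (i : ℕ) (h : i + 1 < l.length)
    (he : l[i]'(by omega) = l[i+1]'h) : l.eraseIdx i = l.eraseIdx (i+1) := by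
  induction l generalizing i with
  | nil => simp at h
  | cons a t ih =>
      cases i with
      | zero =>
          cases t with
          | nil => simp at h
          | cons b t2 => simp_all
      | succ j =>
          simp only [List.eraseIdx_cons_succ]
          have hj : j + 1 < t.length := by simp at h; omega
          rw [ih j hj (by simpa using he)]

lemma mem_eraseIdx_of_ne (l : List Letter) (i : ℕ) (hx : (2:Letter) ∈ l)
    (hne : l.getD i 1 ≠ 2) : (2:Letter) ∈ l.eraseIdx i := by
  induction l generalizing i with
  | nil => simp at hx
  | cons a t ih =>
      cases i with
      | zero =>
          rw [List.eraseIdx_cons_zero]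
          rw [List.getD_cons_zero] at hne
          rcases List.mem_cons.1 hx with h | h
          · exact absurd h.symm hne
          · exact h
      | succ j =>
          rw [List.eraseIdx_cons_succ]
          rw [List.getD_cons_succ] at hne
          rcases List.mem_cons.1 hx with h | h
          · exact List.mem_cons.2 (Or.inl h)
          · exact List.mem_cons.2 (Or.inr (ih j h hne))

end Part1

section Part1b

lemma DcWord_mem_Az0 (β : Letter) (l : List Letter) (hA : Allowed l) :
    DcWord 1 β 0 l ∈ Az0 := by
  rcases hA with rfl | ⟨hh, hl⟩
  · rw [DcWord_nil]; exact zero_mem _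
  · rw [DcWord]
    refine Submodule.sum_mem _ fun i hi => ?_
    rw [Finset.mem_range] at hi
    by_cases hn1 : l.length = 1
    · have hi0 : i = 0 := by omega
      subst hi0
      have he : l.eraseIdx 0 = [] := by
        cases l with
        | nil => simp at hn1
        | cons a t =>
            have : t = [] := by
              simpa using hn1
            subst this
            rfl
      rw [he]
      exact Submodule.smul_mem _ _ (word_mem_Az0 (Or.inl rfl))
    have hn2 : 2 ≤ l.length := by omega
    by_cases hi0 : i = 0
    · subst hi0
      by_cases hb : l.getD 1 1 = 0
      · have h1 : extc 0 l (0+1) = l.getD 0 1 := extc_get 0 l 0 (by omega)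
        have h2 : extc 0 l (0+2) = l.getD 1 1 := extc_get 0 l 1 (by omega)
        rw [h1, h2, hb, extc_zero, dl_comm 1 β (l.getD 0 1) 0, sub_self, zero_smul]
        exact zero_mem _
      · refine Submodule.smul_mem _ _ (word_mem_Az0 (Or.inr ⟨?_, ?_⟩))
        · cases l with
          | nil => simp at hn2
          | cons a t =>
              rw [List.eraseIdx_cons_zero]
              cases t with
              | nil => simp at hn2
              | cons b t' =>
                  simp only [List.head?_cons]
                  intro hc
                  rw [Option.some_inj] at hc
                  exact hb (by simp [hc])
        · rw [eraseIdx_getLast? l 0 (by omega)]; exact hl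
    · by_cases hilast : i = l.length - 1
      · subst hilast
        by_cases hprev : l.getD (l.length - 2) 1 = 1
        · have h1 : extc 0 l (l.length - 1) = l.getD (l.length - 2) 1 := by
            have he : l.length - 1 = (l.length - 2) + 1 := by omega
            rw [he, extc_get 0 l _ (by omega)]
          have h2 : extc 0 l ((l.length - 1) + 1) = l.getD (l.length - 1) 1 := by
            rw [extc_get 0 l _ (by omega)]
          have h3 : extc 0 l ((l.length - 1) + 2) = 1 := by
            have he : (l.length - 1) + 2 = l.length + 1 := by omega
            rw [he, extc_last]
          rw [h1, h2, h3, hprev, dl_comm 1 β (l.getD (l.length - 1) 1) 1, sub_self, zero_smul]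
          exact zero_mem _
        · refine Submodule.smul_mem _ _ (word_mem_Az0 (Or.inr ⟨?_, ?_⟩))
          · rw [eraseIdx_head? l _ (by omega)]; exact hh
          · rw [eraseIdx_last_getLast? l hn2]
            intro hc
            apply hprev
            rw [List.getD_eq_getElem?_getD, hc]
            rfl
      · refine Submodule.smul_mem _ _ (word_mem_Az0 (Or.inr ⟨?_, ?_⟩))
        · rw [eraseIdx_head? l i (by omega)]; exact hh
        · rw [eraseIdx_getLast? l i (by omega)]; exact hl

lemma del_mem_Az0 (β : Letter) {x : Az} (h : x ∈ Az0) : del 1 β x ∈ Az0 := by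
  rw [del_eq]
  induction h using Submodule.span_induction with
  | mem y hy =>
      obtain ⟨l, hl, rfl⟩ := hy
      rw [Delc_word]
      exact DcWord_mem_Az0 β l hl
  | zero => rw [map_zero]; exact zero_mem _
  | add y z _ _ hy hz => rw [map_add]; exact add_mem hy hz
  | smul n y _ hy => rw [map_smul]; exact Submodule.smul_mem _ _ hy

lemma delChain_mem_Az0 (bs : List Letter) {x : Az} (h : x ∈ Az0) : delChain bs x ∈ Az0 := by
  induction bs with
  | nil => simpa [delChain] using h
  | cons b bs ih => rw [delChain_cons_apply]; exact del_mem_Az0 b ih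

lemma DcWord10_allowed (l : List Letter) (hA : Allowed l) (h2 : (2:Letter) ∉ l) :
    DcWord 1 0 0 l = 0 := by
  rcases hA with rfl | ⟨hh, hl⟩
  · exact DcWord_nil 1 0 0
  rcases eq_or_ne l [] with rfl | hne
  · exact DcWord_nil 1 0 0
  have hx : ∀ j, extc 0 l j ≠ 2 := by
    intro j
    rw [extc]
    rcases lt_or_ge j ((0 :: l ++ [1] : List Letter)).length with hj | hj
    · rw [List.getD_eq_getElem _ _ hj]
      intro hc
      have hmem : (2:Letter) ∈ ((0 :: l ++ [1] : List Letter)) := hc ▸ List.getElem_mem _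
      simp only [List.cons_append, List.mem_cons, List.mem_append, List.mem_singleton] at hmem
      rcases hmem with h | h | h
      · exact absurd h (by decide)
      · exact h2 h
      · exact absurd h (by decide)
    · rw [List.getD_eq_getElem?_getD, List.getElem?_eq_none (by omega)]
      simp
  have key : ∀ x y : Letter, x ≠ 2 → y ≠ 2 →
      dl 1 0 x y = 1 - (if x = y then (1:ℤ) else 0) := by decide
  have hcoeff : ∀ i, dl 1 0 (extc 0 l (i+1)) (extc 0 l (i+2))
        - dl 1 0 (extc 0 l i) (extc 0 l (i+1))
      = (if extc 0 l i = extc 0 l (i+1) then (1:ℤ) else 0)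
        - (if extc 0 l (i+1) = extc 0 l (i+2) then (1:ℤ) else 0) := by
    intro i
    rw [key _ _ (hx _) (hx _), key _ _ (hx _) (hx _)]
    ring
  rw [DcWord, Finset.sum_congr rfl fun i _ => by rw [hcoeff i]]
  simp only [sub_smul]
  rw [Finset.sum_sub_distrib]
  obtain ⟨m, hm⟩ : ∃ m, l.length = m + 1 :=
    ⟨l.length - 1, by have := List.length_pos_iff.2 hne; omega⟩
  rw [hm, Finset.sum_range_succ', Finset.sum_range_succ]
  have hC0 : (if extc 0 l 0 = extc 0 l (0+1) then (1:ℤ) else 0) = 0 := by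
    rw [if_neg]
    intro hc
    rw [extc_zero, extc_one_head] at hc
    apply hh
    cases l with
    | nil => exact absurd rfl hne
    | cons a t =>
        rw [List.headD_cons] at hc
        rw [List.head?_cons, ← hc]
  have hCn : (if extc 0 l (m+1) = extc 0 l (m+1+1) then (1:ℤ) else 0) = 0 := by
    rw [if_neg]
    intro hc
    have e1 : extc 0 l (m+1) = l.getD m 1 := extc_get 0 l m (by omega)
    have e2 : extc 0 l (m+1+1) = 1 := by
      have he : m+1+1 = l.length + 1 := by omega
      rw [he, extc_last]
    rw [e1, e2] at hc
    apply hl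
    rw [List.getLast?_eq_getElem?]
    have hmlt : m < l.length := by omega
    rw [show l.length - 1 = m by omega, List.getElem?_eq_getElem hmlt]
    rw [List.getD_eq_getElem _ _ hmlt] at hc
    rw [hc]
  rw [hC0, hCn, zero_smul, zero_smul, add_zero, add_zero, ← Finset.sum_sub_distrib]
  refine Finset.sum_eq_zero fun i hi => ?_
  rw [Finset.mem_range] at hi
  by_cases hieq : extc 0 l (i+1) = extc 0 l (i+1+1)
  · rw [eraseIdx_eq_of_adj l i (by omega) ?_]
    · exact sub_self _
    · have e1 : extc 0 l (i+1) = l.getD i 1 := extc_get 0 l i (by omega)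
      have e2 : extc 0 l (i+1+1) = l.getD (i+1) 1 := extc_get 0 l (i+1) (by omega)
      rw [e1, e2] at hieq
      rw [List.getD_eq_getElem _ _ (by omega), List.getD_eq_getElem _ _ (by omega)] at hieq
      exact hieq
  · rw [if_neg hieq, zero_smul, zero_smul, sub_self]

lemma Const_del10_word (l : List Letter) (hA : Allowed l) : Const (DcWord 1 0 0 l) = 0 := by
  by_cases h2 : (2:Letter) ∈ l
  · rw [DcWord, map_sum]
    refine Finset.sum_eq_zero fun i hi => ?_
    rw [Finset.mem_range] at hi
    rw [map_smul]
    by_cases hc : l.getD i 1 = 2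
    · have h1 : extc 0 l (i+1) = l.getD i 1 := extc_get 0 l i hi
      rw [h1, hc]
      rw [(by decide : ∀ y : Letter, dl 1 0 2 y = 0) _,
        (by decide : ∀ y : Letter, dl 1 0 y 2 = 0) _]
      simp
    · rw [Const_word, if_pos (mem_eraseIdx_of_ne l i h2 hc), smul_zero]
  · rw [DcWord10_allowed l hA h2, map_zero]

lemma ConstDel0 {x : Az} (h : x ∈ Az0) : Const (del 1 0 x) = 0 := by
  rw [del_eq]
  induction h using Submodule.span_induction with
  | mem y hy =>
      obtain ⟨l, hl, rfl⟩ := hy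
      rw [Delc_word]
      exact Const_del10_word l hl
  | zero => simp
  | add y z _ _ hy hz => rw [map_add, map_add, hy, hz, add_zero]
  | smul n y _ hy => rw [map_smul, map_smul, hy, smul_zero]

lemma Const_mem_Az0 {x : Az} (h : x ∈ Az0) : Const x ∈ Az0 := by
  induction h using Submodule.span_induction with
  | mem y hy =>
      obtain ⟨l, hl, rfl⟩ := hy
      rw [Const_word]
      by_cases h2 : (2:Letter) ∈ l
      · rw [if_pos h2]; exact zero_mem _
      · rw [if_neg h2]; exact word_mem_Az0 hl
  | zero => rw [map_zero]; exact zero_mem _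
  | add y z _ _ hy hz => rw [map_add]; exact add_mem hy hz
  | smul n y _ hy => rw [map_smul]; exact Submodule.smul_mem _ _ hy

end Part1b

section Final

lemma interleave_head? : ∀ (n : ℕ) (u v b : List Letter), u.length + v.length ≤ n →
    b ∈ interleave u v → b.head? = u.head? ∨ b.head? = v.head? := by
  intro n
  induction n with
  | zero =>
      intro u v b h hb
      match u, v with
      | [], [] => simp [interleave_nil_left] at hb; subst hb; right; rfl
      | a :: u, v => simp at h
      | [], b' :: v => simp at h
  | succ n ih =>
      intro u v b hlen hb
      match u, v with
      | [], v => simp [interleave_nil_left] at hb; subst hb; right; rfl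
      | a :: u, [] => simp [interleave_nil_right] at hb; subst hb; left; rfl
      | a :: u, b' :: v =>
          rw [interleave_cons, List.mem_append] at hb
          rcases hb with hb | hb <;> rw [List.mem_map] at hb <;> obtain ⟨k, hk, rfl⟩ := hb
          · left; rfl
          · right; rfl

lemma interleave_getLast? : ∀ (n : ℕ) (u v b : List Letter), u.length + v.length ≤ n →
    b ∈ interleave u v → b.getLast? = u.getLast? ∨ b.getLast? = v.getLast? := by
  intro n
  induction n with
  | zero =>
      intro u v b h hb
      match u, v with
      | [], [] => simp [interleave_nil_left] at hb; subst hb; right; rfl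
      | a :: u, v => simp at h
      | [], b' :: v => simp at h
  | succ n ih =>
      intro u v b hlen hb
      match u, v with
      | [], v => simp [interleave_nil_left] at hb; subst hb; right; rfl
      | a :: u, [] => simp [interleave_nil_right] at hb; subst hb; left; rfl
      | a :: u, b' :: v =>
          have hu : u.length + (b' :: v).length ≤ n := by
            simp only [List.length_cons] at hlen ⊢; omega
          have hv : (a :: u).length + v.length ≤ n := by
            simp only [List.length_cons] at hlen ⊢; omega
          rw [interleave_cons, List.mem_append] at hb
          rcases hb with hb | hb <;> rw [List.mem_map] at hb <;> obtain ⟨k, hk, rfl⟩ := hb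
          · have hkne : k ≠ [] := by
              have := interleave_length n u (b' :: v) k hu hk
              intro hc; rw [hc] at this; simp at this
            rw [getLast?_cons_of_ne a hkne]
            rcases ih u (b' :: v) k hu hk with h | h
            · cases u with
              | nil =>
                  rw [interleave_nil_left] at hk
                  simp at hk
                  subst hk
                  right; rfl
              | cons u0 u' =>
                  left
                  rw [getLast?_cons_of_ne a (by simp), h]
            · right; exact h
          · have hkne : k ≠ [] := by
              have := interleave_length n (a :: u) v k hv hk
              intro hc; rw [hc] at this; simp at this; omega
            rw [getLast?_cons_of_ne b' hkne]
            rcases ih (a :: u) v k hv hk with h | h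
            · left; exact h
            · cases v with
              | nil =>
                  rw [interleave_nil_right] at hk
                  simp at hk
                  subst hk
                  left; rfl
              | cons v0 v' =>
                  right
                  rw [getLast?_cons_of_ne b' (by simp), h]

lemma mem_of_getLast?' : ∀ {l : List Letter} {a : Letter}, l.getLast? = some a → a ∈ l := by
  intro l
  induction l with
  | nil => intro a h; simp at h
  | cons x t ih =>
      intro a h
      cases t with
      | nil =>
          simp at h
          simp [h]
      | cons y t' =>
          rw [List.getLast?_cons_cons] at h
          exact List.mem_cons.2 (Or.inr (ih h))

lemma shuffleWord_mem_Az0 {u v : List Letter} (hu : Allowed u) (hv : Allowed v) :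
    shuffleWord u v ∈ Az0 := by
  have hu' : u.head? ≠ some 0 := by
    rcases hu with rfl | ⟨h, _⟩
    · simp
    · exact h
  have hul : u.getLast? ≠ some 1 := by
    rcases hu with rfl | ⟨_, h⟩
    · simp
    · exact h
  have hv' : v.head? ≠ some 0 := by
    rcases hv with rfl | ⟨h, _⟩
    · simp
    · exact h
  have hvl : v.getLast? ≠ some 1 := by
    rcases hv with rfl | ⟨_, h⟩
    · simp
    · exact h
  rw [shuffleWord_eq_sum (u.length + v.length) u v le_rfl]
  refine list_sum_mem fun z hz => ?_
  rw [List.mem_map] at hz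
  obtain ⟨k, hk, rfl⟩ := hz
  refine word_mem_Az0 (Or.inr ⟨?_, ?_⟩)
  · rcases interleave_head? (u.length + v.length) u v k le_rfl hk with h | h <;> rw [h]
    · exact hu'
    · exact hv'
  · rcases interleave_getLast? (u.length + v.length) u v k le_rfl hk with h | h <;> rw [h]
    · exact hul
    · exact hvl

lemma sh_word_right_mem {x : Az} (h : x ∈ Az0) (q : List Letter) (hq : Allowed q) :
    sh x (wordOf q) ∈ Az0 := by
  induction h using Submodule.span_induction with
  | mem y hy =>
      obtain ⟨l, hl, rfl⟩ := hy
      rw [sh_word]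
      exact shuffleWord_mem_Az0 hl hq
  | zero => rw [map_zero, LinearMap.zero_apply]; exact zero_mem _
  | add y z _ _ hy hz => rw [map_add, LinearMap.add_apply]; exact add_mem hy hz
  | smul n y _ hy =>
      rw [map_smul, LinearMap.smul_apply]; exact Submodule.smul_mem _ _ hy

lemma phiShWord_mem (l : List Letter) (hA : Allowed l) : phiShWord l ∈ Az0 := by
  rw [phiShWord]
  refine Submodule.sum_mem _ fun r _ => ?_
  refine list_sum_mem fun z hz => ?_
  rw [List.mem_map] at hz
  obtain ⟨b, hb, rfl⟩ := hz
  cases b with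
  | nil =>
      rw [show delChain [] (wordOf l) = wordOf l from rfl, sh_nilword_right]
      exact Const_mem_Az0 (word_mem_Az0 hA)
  | cons b0 bs =>
      have hb0 := tuples_letters r (b0 :: bs) hb b0 List.mem_cons_self
      rcases hb0 with rfl | rfl
      · rw [delChain_cons_apply, ConstDel0 (delChain_mem_Az0 bs (word_mem_Az0 hA)),
          map_zero, LinearMap.zero_apply]
        exact zero_mem _
      · refine sh_word_right_mem
          (Const_mem_Az0 (delChain_mem_Az0 (2 :: bs) (word_mem_Az0 hA))) _ ?_
        refine Or.inr ⟨by simp, ?_⟩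
        intro hc
        have h1mem : (1:Letter) ∈ (2 :: bs : List Letter) := mem_of_getLast?' hc
        rcases tuples_letters r (2 :: bs) hb 1 h1mem with h | h <;> exact absurd h (by decide)

end Final

/-- `φ_⧢` is a ring endomorphism of `(𝒜_z^0, ⧢)`. -/
theorem stmt_12 :
    (∀ u ∈ Az0, phiSh u ∈ Az0) ∧
    ∀ u ∈ Az0, ∀ v ∈ Az0, phiSh (sh u v) = sh (phiSh u) (phiSh v) := by
  constructor
  · intro u hu
    induction hu using Submodule.span_induction with
    | mem y hy =>
        obtain ⟨l, hl, rfl⟩ := hy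
        rw [phiSh_word]
        exact phiShWord_mem l hl
    | zero => rw [map_zero]; exact zero_mem _
    | add y z _ _ hy hz => rw [map_add]; exact add_mem hy hz
    | smul n y _ hy => rw [map_smul]; exact Submodule.smul_mem _ _ hy
  · intro u _ v _
    exact phiSh_sh u v
end

section
/- φ_⊗ maps A_z^0 into A^0 ⊗ (Z⟨e_0,e_z⟩ ∩ A_z^0). Equivalently, Const(∂_{1,0}(u)) = 0 for all u ∈ A_z^0. -/
open scoped BigOperators

namespace Stmt16

/-- Goodness predicate matching the generators of `Az0`. -/
def Goodl (l : List Letter) : Prop :=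
  l = [] ∨ (l.head? ≠ some 0 ∧ l.getLast? ≠ some 1)

lemma wordOf_mem_Az0 (l : List Letter) (h : Goodl l) : wordOf l ∈ Az0 :=
  Submodule.subset_span ⟨l, h, rfl⟩

lemma wordOf_cons (a : Letter) (t : List Letter) :
    wordOf (a :: t) = wordOf [a] * wordOf t := by
  rw [wordOf, wordOf, wordOf, MonoidAlgebra.single_mul_single, one_mul]
  rfl

lemma getD_eraseIdx (L : List Letter) :
    ∀ k j : ℕ, (L.eraseIdx k).getD j 1 = if j < k then L.getD j 1 else L.getD (j+1) 1 := by
  induction L with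
  | nil => intro k j; simp [List.eraseIdx]
  | cons a t ih =>
    intro k j
    cases k with
    | zero => simp
    | succ k =>
      cases j with
      | zero => simp
      | succ j => simpa using ih k j

lemma ext_zero (l : List Letter) : ext l 0 = 0 := rfl

lemma ext_succ (l : List Letter) (i : ℕ) : ext l (i+1) = l.getD i 1 := by
  induction l generalizing i with
  | nil => cases i <;> rfl
  | cons a t ih =>
    cases i with
    | zero => rfl
    | succ i => simpa [ext, List.getD_cons_succ] using ih i

lemma ext_last (l : List Letter) : ext l (l.length + 1) = 1 := by
  rw [ext_succ]
  exact List.getD_eq_default _ _ le_rfl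

lemma ext_eraseIdx (l : List Letter) {i : ℕ} (_hi : i < l.length) (j : ℕ) :
    ext (l.eraseIdx i) j = if j ≤ i then ext l j else ext l (j+1) := by
  cases j with
  | zero => simp [ext_zero]
  | succ j =>
    rw [ext_succ, getD_eraseIdx]
    by_cases h : j < i
    · rw [if_pos h, if_pos (by omega : j + 1 ≤ i), ext_succ]
    · rw [if_neg h, if_neg (by omega : ¬ (j + 1 ≤ i)), ext_succ]

end Stmt16
namespace Stmt16

lemma pair2_left (y : Letter) : ({(2:Letter), y} : Finset Letter) ≠ {1, 0} := by revert y; decide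
lemma pair2_right (x : Letter) : ({x, (2:Letter)} : Finset Letter) ≠ {1, 0} := by revert x; decide
lemma pair_self_ne (a : Letter) : ({a, a} : Finset Letter) ≠ {1, 0} := by revert a; decide
lemma pair_eq_of_ne (a b : Letter) (ha : a ≠ 2) (hb : b ≠ 2) (hab : a ≠ b) :
    ({a, b} : Finset Letter) = {1, 0} := by revert a b; decide
lemma letter_eq_one (a : Letter) (h0 : a ≠ 0) (h2 : a ≠ 2) : a = 1 := by revert a; decide
lemma letter_eq_zero (a : Letter) (h1 : a ≠ 1) (h2 : a ≠ 2) : a = 0 := by revert a; decide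
lemma pair_zero_one : ({(0:Letter), 1} : Finset Letter) = {1, 0} := by decide

/-- `∂_{1,0}` on a word, with general left boundary letter `x`. -/
noncomputable def Fw (x : Letter) (a : List Letter) : Az :=
  ∑ i ∈ Finset.range a.length,
    (((if ({(x :: a ++ [1]).getD (i+1) 1, (x :: a ++ [1]).getD (i+2) 1} : Finset Letter) = {1, 0} then 1 else 0)
      - (if ({(x :: a ++ [1]).getD i 1, (x :: a ++ [1]).getD (i+1) 1} : Finset Letter) = {1, 0} then 1 else 0) : ℤ))
      • wordOf (a.eraseIdx i)

lemma Dword_eq_Fw (a : List Letter) : Dword 1 0 a = Fw 0 a := rfl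

lemma Fw_cons (x a : Letter) (t : List Letter) :
    Fw x (a :: t) =
      ((if ({a, (a :: t ++ [1]).getD 1 1} : Finset Letter) = {1, 0} then 1 else 0)
        - (if ({x, a} : Finset Letter) = {1, 0} then 1 else 0) : ℤ) • wordOf t
      + wordOf [a] * Fw a t := by
  rw [Fw, show (a :: t).length = t.length + 1 from rfl, Finset.sum_range_succ', add_comm]
  congr 1
  · rw [Fw, Finset.mul_sum]
    refine Finset.sum_congr rfl fun i hi => ?_
    rw [List.eraseIdx_cons_succ, wordOf_cons, mul_smul_comm]
    rfl

end Stmt16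
namespace Stmt16

lemma Fw_eq : ∀ (t : List Letter) (a x : Letter), (2:Letter) ∉ (a :: t) →
    (a :: t).getLast? = some 0 →
    Fw x (a :: t) =
      ((1 : ℤ) - (if ({x, a} : Finset Letter) = {1, 0} then 1 else 0)) • wordOf t := by
  intro t
  induction t with
  | nil =>
    intro a x h2 hl
    have ha : a = 0 := by simpa using hl
    subst ha
    rw [Fw_cons]
    have h1 : ((0 : Letter) :: [] ++ [1]).getD 1 1 = 1 := rfl
    rw [h1, if_pos pair_zero_one]
    have h0 : Fw 0 [] = 0 := by simp [Fw]
    rw [h0, mul_zero, add_zero]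
  | cons b t' ih =>
    intro a x h2 hl
    have hb2 : (2:Letter) ∉ (b :: t') := fun h => h2 (List.mem_cons_of_mem _ h)
    have ha2 : a ≠ 2 := fun h => h2 (by rw [h]; exact List.mem_cons_self)
    have hb2' : b ≠ 2 := fun h => hb2 (by rw [h]; exact List.mem_cons_self)
    have hlb : (b :: t').getLast? = some 0 := by rwa [List.getLast?_cons_cons] at hl
    rw [Fw_cons, ih b a hb2 hlb]
    have hgd : ((a :: (b :: t') ++ [1]).getD 1 1) = b := rfl
    rw [hgd]
    by_cases hab : a = b
    · subst hab
      rw [if_neg (pair_self_ne a), mul_smul_comm, ← wordOf_cons]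
      module
    · rw [if_pos (pair_eq_of_ne a b ha2 hb2' hab)]
      simp

lemma mem_eraseIdx_of_ne {x : Letter} :
    ∀ (l : List Letter) (i : ℕ), x ∈ l → l.getD i 1 ≠ x → x ∈ l.eraseIdx i := by
  intro l
  induction l with
  | nil => simp
  | cons a t ih =>
    intro i hx hne
    cases i with
    | zero =>
      rcases List.mem_cons.1 hx with h | h
      · exact absurd h.symm hne
      · simpa using h
    | succ i =>
      rcases List.mem_cons.1 hx with h | h
      · rw [List.eraseIdx_cons_succ, h]; exact List.mem_cons_self
      · exact List.mem_cons_of_mem _ (ih i h (by simpa using hne))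

lemma goodl_iff (l : List Letter) :
    Goodl l ↔ (ext l 1 ≠ 0 ∧ ext l l.length ≠ 1) := by
  cases l with
  | nil =>
    constructor
    · intro _; exact ⟨by decide, by decide⟩
    · intro _; exact Or.inl rfl
  | cons a t =>
    have hh : ext (a :: t) 1 = a := rfl
    have hlast : ext (a :: t) (a :: t).length
        = (a :: t).getLast (List.cons_ne_nil a t) := by
      rw [List.length_cons, ext_succ,
        List.getD_eq_getElem _ _ (by simp), List.getLast_eq_getElem]
      simp
    have hl? : (a :: t).getLast? = some ((a :: t).getLast (List.cons_ne_nil a t)) :=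
      List.getLast?_eq_getLast _
    constructor
    · rintro (h | ⟨h1, h2⟩)
      · exact absurd h (List.cons_ne_nil a t)
      · refine ⟨?_, ?_⟩
        · rw [hh]; intro h; exact h1 (by rw [List.head?_cons, h])
        · rw [hlast]; intro h; exact h2 (by rw [hl?, h])
    · rintro ⟨h1, h2⟩
      refine Or.inr ⟨?_, ?_⟩
      · rw [List.head?_cons]; intro h; exact h1 (by rw [hh]; exact Option.some_injective _ h)
      · rw [hl?]; intro h; exact h2 (by rw [hlast]; exact Option.some_injective _ h)

lemma del_wordOf (α β : Letter) (l : List Letter) : del α β (wordOf l) = Dword α β l := by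
  rw [del, wordOf, LinearMap.comp_apply, LinearEquiv.coe_coe, MonoidAlgebra.coeffLinearEquiv_apply,
    MonoidAlgebra.coeff_single]
  erw [Finsupp.lsum_single, LinearMap.toSpanSingleton_apply_one]
  rw [FreeMonoid.toList_ofList]

lemma Const_wordOf (l : List Letter) :
    Const (wordOf l) = if (2:Letter) ∈ l then 0 else wordOf l := by
  rw [Const, wordOf, LinearMap.comp_apply, LinearEquiv.coe_coe, MonoidAlgebra.coeffLinearEquiv_apply,
    MonoidAlgebra.coeff_single]
  erw [Finsupp.lsum_single, LinearMap.toSpanSingleton_apply_one]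
  rw [FreeMonoid.toList_ofList, wordOf]

lemma phiT_wordOf (l : List Letter) : phiT (wordOf l) = phiTWord l := by
  rw [phiT, wordOf, LinearMap.comp_apply, LinearEquiv.coe_coe, MonoidAlgebra.coeffLinearEquiv_apply,
    MonoidAlgebra.coeff_single]
  erw [Finsupp.lsum_single, LinearMap.toSpanSingleton_apply_one]
  rw [FreeMonoid.toList_ofList]

end Stmt16
namespace Stmt16

lemma Dword_mem_Az0 (α β : Letter) (l : List Letter) (hl : Goodl l) :
    Dword α β l ∈ Az0 := by
  rw [Dword]
  apply Submodule.sum_mem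
  intro i hi
  have hi' : i < l.length := Finset.mem_range.1 hi
  by_cases h : ext l i = ext l (i+2)
  · have hpair : ({ext l (i+1), ext l (i+2)} : Finset Letter)
        = {ext l i, ext l (i+1)} := by rw [h, Finset.pair_comm]
    rw [hpair, sub_self, zero_smul]
    exact zero_mem _
  · apply Submodule.smul_mem
    apply wordOf_mem_Az0
    rw [goodl_iff] at hl ⊢
    obtain ⟨hl1, hl2⟩ := hl
    constructor
    · rw [ext_eraseIdx l hi' 1]
      by_cases h1 : 1 ≤ i
      · rw [if_pos h1]; exact hl1
      · rw [if_neg h1]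
        intro h0
        apply h
        have hi0 : i = 0 := by omega
        subst hi0
        rw [ext_zero, h0]
    · rw [List.length_eraseIdx, if_pos hi', ext_eraseIdx l hi' (l.length - 1)]
      by_cases h2 : l.length - 1 ≤ i
      · rw [if_pos h2]
        intro hbad
        apply h
        have hieq : i = l.length - 1 := by omega
        subst hieq
        rw [hbad, show l.length - 1 + 2 = l.length + 1 by omega, ext_last]
      · rw [if_neg h2, show l.length - 1 + 1 = l.length by omega]
        exact hl2

lemma Const_Dword10 (l : List Letter) (hl : Goodl l) : Const (Dword 1 0 l) = 0 := by
  by_cases h2 : (2:Letter) ∈ l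
  · rw [Dword, map_sum]
    apply Finset.sum_eq_zero
    intro i hi
    have hi' : i < l.length := Finset.mem_range.1 hi
    rw [map_smul]
    by_cases hx : l.getD i 1 = 2
    · have he : ext l (i+1) = 2 := (ext_succ l i).trans hx
      rw [if_neg (by rw [he]; exact pair2_left _), if_neg (by rw [he]; exact pair2_right _)]
      simp
    · have hm : (2:Letter) ∈ l.eraseIdx i := mem_eraseIdx_of_ne l i h2 hx
      rw [Const_wordOf, if_pos hm, smul_zero]
  · cases l with
    | nil => simp [Dword]
    | cons a t =>
      rcases hl with h | ⟨hh, hlt⟩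
      · exact absurd h (List.cons_ne_nil a t)
      · have ha2 : a ≠ 2 := fun h => h2 (by rw [h]; exact List.mem_cons_self)
        have ha0 : a ≠ 0 := fun h => hh (by rw [List.head?_cons, h])
        have ha : a = 1 := letter_eq_one a ha0 ha2
        have hx := List.getLast?_eq_getLast (List.cons_ne_nil a t)
        set x := (a :: t).getLast (List.cons_ne_nil a t) with hxdef
        have hx1 : x ≠ 1 := fun h => hlt (by rw [hx, h])
        have hx2 : x ≠ 2 := fun h => h2 (h ▸ List.getLast_mem _)
        have hx0 : x = 0 := letter_eq_zero x hx1 hx2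
        have hlast : (a :: t).getLast? = some 0 := by rw [hx, hx0]
        rw [Dword_eq_Fw, Fw_eq t a 0 h2 hlast, ha, if_pos pair_zero_one]
        simp

lemma del_mem_Az0 (α β : Letter) {u : Az} (hu : u ∈ Az0) : del α β u ∈ Az0 := by
  refine Submodule.span_induction
    (p := fun x _ => del α β x ∈ Az0) ?_ ?_ ?_ ?_ hu
  · rintro x ⟨l, hl, rfl⟩
    rw [del_wordOf]
    exact Dword_mem_Az0 α β l hl
  · simp
  · intro x y _ _ hx hy; rw [map_add]; exact add_mem hx hy
  · intro a x _ hx; rw [map_smul]; exact Submodule.smul_mem _ _ hx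

lemma delChain_mem_Az0 : ∀ (b : List Letter) {u : Az}, u ∈ Az0 → delChain b u ∈ Az0 := by
  intro b
  induction b with
  | nil => intro u hu; exact hu
  | cons a bs ih =>
    intro u hu
    rw [delChain, LinearMap.comp_apply]
    exact del_mem_Az0 _ _ (ih hu)

lemma Const_mem_A0sub {u : Az} (hu : u ∈ Az0) : Const u ∈ A0sub := by
  refine Submodule.span_induction
    (p := fun x _ => Const x ∈ A0sub) ?_ ?_ ?_ ?_ hu
  · rintro x ⟨l, hl, rfl⟩
    rw [Const_wordOf]
    by_cases h2 : (2:Letter) ∈ l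
    · rw [if_pos h2]; exact zero_mem _
    · rw [if_neg h2]
      apply Submodule.subset_span
      refine ⟨l, ⟨h2, ?_⟩, rfl⟩
      rcases hl with h | ⟨hh, hlt⟩
      · exact Or.inl h
      · cases l with
        | nil => exact Or.inl rfl
        | cons a t =>
          refine Or.inr ⟨?_, ?_⟩
          · have ha2 : a ≠ 2 := fun h => h2 (by rw [h]; exact List.mem_cons_self)
            have ha0 : a ≠ 0 := fun h => hh (by rw [List.head?_cons, h])
            rw [List.head?_cons, letter_eq_one a ha0 ha2]
          · have hx := List.getLast?_eq_getLast (List.cons_ne_nil a t)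
            set x := (a :: t).getLast (List.cons_ne_nil a t) with hxdef
            have hx1 : x ≠ 1 := fun h => hlt (by rw [hx, h])
            have hx2 : x ≠ 2 := fun h => h2 (h ▸ List.getLast_mem _)
            rw [hx, letter_eq_zero x hx1 hx2]
  · simp
  · intro x y _ _ hx hy; rw [map_add]; exact add_mem hx hy
  · intro a x _ hx; rw [map_smul]; exact Submodule.smul_mem _ _ hx

lemma const_del10 (u : Az) (hu : u ∈ Az0) : Const (del 1 0 u) = 0 := by
  refine Submodule.span_induction
    (p := fun x _ => Const (del 1 0 x) = 0) ?_ ?_ ?_ ?_ hu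
  · rintro x ⟨l, hl, rfl⟩
    rw [del_wordOf]
    exact Const_Dword10 l hl
  · simp
  · intro x y _ _ hx hy; rw [map_add, map_add, hx, hy, add_zero]
  · intro a x _ hx; rw [map_smul, map_smul, hx, smul_zero]

lemma tuples_letters : ∀ (r : ℕ) (b : List Letter), b ∈ tuples r →
    ∀ x ∈ b, x = 0 ∨ x = 2 := by
  intro r
  induction r with
  | zero =>
    intro b hb x hx
    simp [tuples] at hb
    subst hb
    simp at hx
  | succ n ih =>
    intro b hb x hx
    rw [tuples, List.mem_flatMap] at hb
    obtain ⟨t, ht, hbt⟩ := hb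
    simp only [List.mem_cons, List.mem_singleton, List.not_mem_nil, or_false] at hbt
    rcases hbt with rfl | rfl
    · rcases List.mem_cons.1 hx with rfl | h
      · exact Or.inl rfl
      · exact ih t ht x h
    · rcases List.mem_cons.1 hx with rfl | h
      · exact Or.inr rfl
      · exact ih t ht x h

end Stmt16
/-- `φ_⊗` maps `𝒜_z^0` into `𝒜^0 ⊗ (ℤ⟨e₀,e_z⟩ ∩ 𝒜_z^0)`;
equivalently `Const(∂_{1,0}(u)) = 0` for all `u ∈ 𝒜_z^0`. -/
theorem stmt_16 :
    (∀ w ∈ Az0, phiT w ∈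
      LinearMap.range (TensorProduct.map A0sub.subtype Vsub.subtype)) ∧
    ∀ u ∈ Az0, Const (del 1 0 u) = 0 := by
  constructor
  · intro w hw
    refine Submodule.span_induction
      (p := fun x _ => phiT x ∈
        LinearMap.range (TensorProduct.map A0sub.subtype Vsub.subtype)) ?_ ?_ ?_ ?_ hw
    · rintro x ⟨l, hl, rfl⟩
      rw [Stmt16.phiT_wordOf, phiTWord]
      apply Submodule.sum_mem
      intro r _
      apply list_sum_mem
      intro y hy
      rw [List.mem_map] at hy
      obtain ⟨b, hb, rfl⟩ := hy
      cases b with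
      | nil =>
        have hx : Const (delChain [] (wordOf l)) ∈ A0sub :=
          Stmt16.Const_mem_A0sub (Stmt16.delChain_mem_Az0 [] (Stmt16.wordOf_mem_Az0 l hl))
        have hy : wordOf ([] : List Letter) ∈ Vsub :=
          Submodule.subset_span ⟨[], ⟨by simp, Or.inl rfl⟩, rfl⟩
        exact ⟨(⟨_, hx⟩ ⊗ₜ[ℤ] ⟨_, hy⟩), by rw [TensorProduct.map_tmul]; rfl⟩
      | cons a bs =>
        rcases Stmt16.tuples_letters r _ hb a (List.mem_cons_self) with h0 | h2
        · subst h0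
          have hz : Const (delChain ((0:Letter) :: bs) (wordOf l)) = 0 := by
            rw [delChain, LinearMap.comp_apply]
            exact Stmt16.const_del10 _ (Stmt16.delChain_mem_Az0 bs (Stmt16.wordOf_mem_Az0 l hl))
          rw [hz, TensorProduct.zero_tmul]
          exact zero_mem _
        · subst h2
          have hx : Const (delChain ((2:Letter) :: bs) (wordOf l)) ∈ A0sub :=
            Stmt16.Const_mem_A0sub (Stmt16.delChain_mem_Az0 _ (Stmt16.wordOf_mem_Az0 l hl))
          have h1 : (1:Letter) ∉ (2:Letter) :: bs := by
            intro h
            rcases Stmt16.tuples_letters r _ hb 1 h with h' | h' <;> exact absurd h' (by decide)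
          have hy : wordOf ((2:Letter) :: bs) ∈ Vsub :=
            Submodule.subset_span ⟨(2:Letter) :: bs, ⟨h1, Or.inr rfl⟩, rfl⟩
          exact ⟨(⟨_, hx⟩ ⊗ₜ[ℤ] ⟨_, hy⟩), by rw [TensorProduct.map_tmul]; rfl⟩
    · show phiT 0 ∈ _
      rw [map_zero]; exact zero_mem _
    · intro x y _ _ hx hy
      show phiT (x + y) ∈ _
      rw [map_add]; exact add_mem hx hy
    · intro a x _ hx
      show phiT (a • x) ∈ _
      rw [map_smul]; exact Submodule.smul_mem _ _ hx
  · exact Stmt16.const_del10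
end
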